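/- arXiv:2106.00953 — 6 statements merged into one kernel-verified Lean document; each statement's English description precedes it below -/
import Mathlib

section
/- There exists one and only one invariant probability measure π on (S,Σ), and for every bounded measurable function φ : S → ℝ and every integer n ≥ 1 one has sup_{x∈S} |Pⁿφ(x) − ∫_S φ dπ| ≤ C‖φ‖ e^{−ρn}, where ρ = log(1/(1 − δ·μ(U₀))) > 0 and C = 2/(1 − δ·μ(U₀)), and in particular ρ and C do not depend on φ. -/
open MeasureTheory

open Function
section Helpers
variable {S : Type*} [MeasurableSpace S]

lemma integrable_of_bdd {μ : Measure S} [IsFiniteMeasure μ]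
    {f : S → ℝ} (hf : Measurable f) {C : ℝ} (hC : ∀ x, |f x| ≤ C) : Integrable f μ :=
  ⟨hf.aestronglyMeasurable,
    HasFiniteIntegral.of_bounded (C := C) (ae_of_all _ fun x => by
      simpa [Real.norm_eq_abs] using hC x)⟩

lemma abs_integral_le_of_bdd {μ : Measure S} [IsProbabilityMeasure μ]
    {f : S → ℝ} {C : ℝ} (hC : ∀ x, |f x| ≤ C) : |∫ x, f x ∂μ| ≤ C := by
  have := norm_integral_le_of_norm_le_const (μ := μ) (f := f) (C := C)
    (ae_of_all _ fun x => by simpa [Real.norm_eq_abs] using hC x)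
  simpa [Real.norm_eq_abs] using this

lemma swap_int (ν₁ ν₂ : Measure S) [IsFiniteMeasure ν₁] [IsFiniteMeasure ν₂]
    {f : S → S → ℝ} (hf : Measurable (uncurry f)) {C : ℝ} (hC : ∀ x y, |f x y| ≤ C) :
    ∫ x, ∫ y, f x y ∂ν₂ ∂ν₁ = ∫ y, ∫ x, f x y ∂ν₁ ∂ν₂ := by
  refine integral_integral_swap ?_
  exact integrable_of_bdd (μ := ν₁.prod ν₂) hf (fun z => hC z.1 z.2)

end Helpers

noncomputable def doobT {S : Type*} [MeasurableSpace S] (μ : Measure S) (p : S × S → ℝ)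
    (g : S → ℝ) : S → ℝ := fun y => ∫ x, p (x, y) * g x ∂μ

section DoobT
variable {S : Type*} [MeasurableSpace S] {μ : Measure S} [IsProbabilityMeasure μ]
  {p : S × S → ℝ} (hpm : Measurable p) {M : ℝ} (hpM : ∀ z, |p z| ≤ M)

set_option linter.unusedSectionVars false
include hpm hpM

lemma doobT_meas {g : S → ℝ} (hg : Measurable g) : Measurable (doobT μ p g) := by
  have : StronglyMeasurable (fun z : S × S => p z * g z.1) :=
    (hpm.mul (hg.comp measurable_fst)).stronglyMeasurable
  exact this.integral_prod_left'.measurable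

lemma doobT_abs_le {g : S → ℝ} {C : ℝ} (hgC : ∀ x, |g x| ≤ C) (y : S) :
    |doobT μ p g y| ≤ M * C := by
  refine abs_integral_le_of_bdd (fun x => ?_)
  rw [abs_mul]
  have h0 : (0:ℝ) ≤ |p (x, y)| := abs_nonneg _
  have h1 : (0:ℝ) ≤ |g x| := abs_nonneg _
  exact mul_le_mul (hpM _) (hgC x) h1 (le_trans h0 (hpM _))

lemma doobT_integral (hp_int : ∀ x : S, ∫ y, p (x, y) ∂μ = 1)
    {g : S → ℝ} (hg : Measurable g) {C : ℝ} (hgC : ∀ x, |g x| ≤ C) :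
    ∫ y, doobT μ p g y ∂μ = ∫ x, g x ∂μ := by
  have hmeas : Measurable (uncurry fun x y => p (x, y) * g x) :=
    hpm.mul (hg.comp measurable_fst)
  have hbd : ∀ x y, |p (x, y) * g x| ≤ M * C := fun x y => by
    rw [abs_mul]
    exact mul_le_mul (hpM _) (hgC x) (abs_nonneg _)
      (le_trans (abs_nonneg (p (x, y))) (hpM (x, y)))
  have := (swap_int μ μ hmeas hbd).symm
  simp only [doobT]
  rw [this]
  congr 1
  funext x
  rw [integral_mul_const, hp_int x, one_mul]

lemma doobT_sub {g₁ g₂ : S → ℝ} (h1 : Measurable g₁) (h2 : Measurable g₂)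
    {C₁ C₂ : ℝ} (hC1 : ∀ x, |g₁ x| ≤ C₁) (hC2 : ∀ x, |g₂ x| ≤ C₂) (y : S) :
    doobT μ p (fun x => g₁ x - g₂ x) y = doobT μ p g₁ y - doobT μ p g₂ y := by
  simp only [doobT, mul_sub]
  refine integral_sub ?_ ?_
  · exact integrable_of_bdd ((hpm.comp (measurable_id.prodMk measurable_const)).mul h1)
      (C := M * C₁) (fun x => by
        rw [abs_mul]
        exact mul_le_mul (hpM _) (hC1 x) (abs_nonneg _)
          (le_trans (abs_nonneg (p (x, y))) (hpM (x, y))))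
  · exact integrable_of_bdd ((hpm.comp (measurable_id.prodMk measurable_const)).mul h2)
      (C := M * C₂) (fun x => by
        rw [abs_mul]
        exact mul_le_mul (hpM _) (hC2 x) (abs_nonneg _)
          (le_trans (abs_nonneg (p (x, y))) (hpM (x, y))))

lemma doobT_nonneg (hp_nonneg : ∀ z, 0 ≤ p z) {g : S → ℝ} (hg0 : ∀ x, 0 ≤ g x) (y : S) :
    0 ≤ doobT μ p g y :=
  integral_nonneg (fun x => mul_nonneg (hp_nonneg _) (hg0 x))

lemma doobT_le_of_int (hp_nonneg : ∀ z, 0 ≤ p z) {g : S → ℝ} (hg : Measurable g)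
    (hg0 : ∀ x, 0 ≤ g x) {C : ℝ} (hgC : ∀ x, |g x| ≤ C) (y : S) :
    doobT μ p g y ≤ M * ∫ x, g x ∂μ := by
  rw [← integral_const_mul]
  refine integral_mono ?_ ?_ (fun x => ?_)
  · exact integrable_of_bdd ((hpm.comp (measurable_id.prodMk measurable_const)).mul hg)
      (C := M * C) (fun x => by
        rw [abs_mul]
        exact mul_le_mul (hpM _) (hgC x) (abs_nonneg _)
          (le_trans (abs_nonneg (p (x, y))) (hpM (x, y))))
  · exact (integrable_of_bdd hg hgC).const_mul M
  · exact mul_le_mul_of_nonneg_right (le_trans (le_abs_self _) (hpM (x, y))) (hg0 x)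

end DoobT

section DoobContract
set_option linter.unusedSectionVars false
variable {S : Type*} [MeasurableSpace S] {μ : Measure S} [IsProbabilityMeasure μ]
  {p : S × S → ℝ} (hpm : Measurable p) {M : ℝ} (hpM : ∀ z, |p z| ≤ M)
  (hp_nonneg : ∀ z, 0 ≤ p z) (hp_int : ∀ x : S, ∫ y, p (x, y) ∂μ = 1)
  {U₀ : Set S} (hU₀ : MeasurableSet U₀) {δ : ℝ} (hδ : 0 < δ)
  (hp_low : ∀ x : S, ∀ y ∈ U₀, δ ≤ p (x, y))

include hpm hpM hp_nonneg hp_int hU₀ hδ hp_low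

-- kernel k x y = p (x,y) - δ * indicator
private lemma kk_nonneg (x y : S) :
    0 ≤ p (x, y) - δ * U₀.indicator (fun _ => (1:ℝ)) y := by
  by_cases hy : y ∈ U₀
  · simp only [Set.indicator_of_mem hy, mul_one]
    linarith [hp_low x y hy]
  · simp only [Set.indicator_of_notMem hy, mul_zero, sub_zero]
    exact hp_nonneg _

private lemma kk_abs_le (x y : S) :
    |p (x, y) - δ * U₀.indicator (fun _ => (1:ℝ)) y| ≤ M + δ := by
  rw [abs_of_nonneg (kk_nonneg hpm hpM hp_nonneg hp_int hU₀ hδ hp_low x y)]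
  have h1 : p (x, y) ≤ M := le_trans (le_abs_self _) (hpM _)
  have h2 : 0 ≤ δ * U₀.indicator (fun _ => (1:ℝ)) y := by
    by_cases hy : y ∈ U₀ <;> simp [Set.indicator_of_mem, Set.indicator_of_notMem, hy, hδ.le]
  linarith

private lemma kk_meas : Measurable fun z : S × S =>
    p z - δ * U₀.indicator (fun _ => (1:ℝ)) z.2 :=
  hpm.sub (Measurable.const_mul
    ((measurable_const.indicator hU₀ : Measurable (U₀.indicator (fun _ => (1:ℝ)))).comp
      measurable_snd) δ)

private lemma kk_int (x : S) :
    ∫ y, (p (x, y) - δ * U₀.indicator (fun _ => (1:ℝ)) y) ∂μ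
      = 1 - δ * (μ U₀).toReal := by
  have h1 : Integrable (fun y => p (x, y)) μ :=
    integrable_of_bdd (hpm.comp (measurable_const.prodMk measurable_id)) (fun y => hpM _)
  have h2 : Integrable (fun y => δ * U₀.indicator (fun _ => (1:ℝ)) y) μ := by
    refine Integrable.const_mul ?_ δ
    exact integrable_of_bdd (measurable_const.indicator hU₀) (C := 1) (fun y => by
      by_cases hy : y ∈ U₀ <;> simp [Set.indicator_of_mem, Set.indicator_of_notMem, hy])
  rw [integral_sub h1 h2, hp_int x, integral_const_mul, integral_indicator_const (1:ℝ) hU₀]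
  simp [Measure.real]

lemma doobT_contract {g : S → ℝ} (hg : Measurable g) {C : ℝ} (hgC : ∀ x, |g x| ≤ C)
    (hg0 : ∫ x, g x ∂μ = 0) :
    ∫ y, |doobT μ p g y| ∂μ ≤ (1 - δ * (μ U₀).toReal) * ∫ x, |g x| ∂μ := by
  set ind := U₀.indicator (fun _ => (1:ℝ)) with hind
  have hindm : Measurable ind := measurable_const.indicator hU₀
  have hgI : Integrable g μ := integrable_of_bdd hg hgC
  -- rewrite T g y
  have hrw : ∀ y, doobT μ p g y = ∫ x, (p (x, y) - δ * ind y) * g x ∂μ := by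
    intro y
    simp only [sub_mul]
    rw [integral_sub]
    · have : ∫ x, δ * ind y * g x ∂μ = δ * ind y * ∫ x, g x ∂μ := integral_const_mul _ _
      rw [this, hg0, mul_zero, sub_zero]; rfl
    · exact integrable_of_bdd ((hpm.comp (measurable_id.prodMk measurable_const)).mul hg)
        (C := M * C) (fun x => by
          rw [abs_mul]
          exact mul_le_mul (hpM _) (hgC x) (abs_nonneg _)
            (le_trans (abs_nonneg (p (x, y))) (hpM (x, y))))
    · exact (hgI.const_mul _)
  -- pointwise bound
  have hpt : ∀ y, |doobT μ p g y| ≤ ∫ x, (p (x, y) - δ * ind y) * |g x| ∂μ := by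
    intro y
    rw [hrw y]
    calc |∫ x, (p (x, y) - δ * ind y) * g x ∂μ|
        ≤ ∫ x, |p (x, y) - δ * ind y| * |g x| ∂μ := by
          simpa [Real.norm_eq_abs] using
            norm_integral_le_integral_norm (fun x => (p (x, y) - δ * ind y) * g x) (μ := μ)
      _ = ∫ x, (p (x, y) - δ * ind y) * |g x| ∂μ := by
          congr 1; funext x
          rw [abs_of_nonneg (kk_nonneg hpm hpM hp_nonneg hp_int hU₀ hδ hp_low x y)]
  -- integrate
  have hF : ∀ x y, abs ((p (x, y) - δ * ind y) * |g x|) ≤ (M + δ) * C := fun x y => by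
    rw [abs_mul, abs_abs]
    refine mul_le_mul (kk_abs_le hpm hpM hp_nonneg hp_int hU₀ hδ hp_low x y) (hgC x)
      (abs_nonneg _) ?_
    have := hδ.le; have := le_trans (abs_nonneg (p (x,y))) (hpM (x,y)); linarith
  have hFm : Measurable (uncurry fun x y => (p (x, y) - δ * ind y) * |g x|) :=
    ((kk_meas hpm hpM hp_nonneg hp_int hU₀ hδ hp_low).mul ((hg.comp measurable_fst).abs))
  have hswap := swap_int (f := fun x y => (p (x, y) - δ * ind y) * |g x|) μ μ hFm hF
  have hInner : Measurable fun y => ∫ x, (p (x, y) - δ * ind y) * |g x| ∂μ := by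
    exact hFm.stronglyMeasurable.integral_prod_left'.measurable
  calc ∫ y, |doobT μ p g y| ∂μ
      ≤ ∫ y, ∫ x, (p (x, y) - δ * ind y) * |g x| ∂μ ∂μ := by
        refine integral_mono ?_ ?_ hpt
        · exact integrable_of_bdd (doobT_meas hpm hpM hg).abs (C := M * C)
            (fun y => by rw [abs_abs]; exact doobT_abs_le hpm hpM hgC y)
        · exact integrable_of_bdd hInner (C := (M + δ) * C) (fun y =>
            abs_integral_le_of_bdd (fun x => hF x y))
    _ = ∫ x, ∫ y, (p (x, y) - δ * ind y) * |g x| ∂μ ∂μ := hswap.symm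
    _ = ∫ x, (1 - δ * (μ U₀).toReal) * |g x| ∂μ := by
        congr 1; funext x
        rw [integral_mul_const, kk_int hpm hpM hp_nonneg hp_int hU₀ hδ hp_low x]
    _ = (1 - δ * (μ U₀).toReal) * ∫ x, |g x| ∂μ := integral_const_mul _ _

end DoobContract

section DoobOsc
set_option linter.unusedSectionVars false
variable {S : Type*} [MeasurableSpace S] [Nonempty S] {μ : Measure S} [IsProbabilityMeasure μ]
  {p : S × S → ℝ} (hpm : Measurable p) {M : ℝ} (hpM : ∀ z, |p z| ≤ M)
  (hp_nonneg : ∀ z, 0 ≤ p z) (hp_int : ∀ x : S, ∫ y, p (x, y) ∂μ = 1)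
  {U₀ : Set S} (hU₀ : MeasurableSet U₀) {δ : ℝ} (hδ : 0 < δ)
  (hp_low : ∀ x : S, ∀ y ∈ U₀, δ ≤ p (x, y))

include hpm hpM hp_nonneg hp_int hU₀ hδ hp_low

lemma doobP_abs_le {ψ : S → ℝ} (hψ : Measurable ψ) {B : ℝ} (hψB : ∀ y, |ψ y| ≤ B) (x : S) :
    |∫ y, p (x, y) * ψ y ∂μ| ≤ B := by
  have hB0 : 0 ≤ B := le_trans (abs_nonneg _) (hψB (Classical.arbitrary S))
  have hpy : Measurable fun y => p (x, y) := hpm.comp (measurable_const.prodMk measurable_id)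
  calc |∫ y, p (x, y) * ψ y ∂μ| ≤ ∫ y, |p (x, y)| * |ψ y| ∂μ := by
        simpa [Real.norm_eq_abs] using
          norm_integral_le_integral_norm (fun y => p (x, y) * ψ y) (μ := μ)
    _ ≤ ∫ y, p (x, y) * B ∂μ := by
        refine integral_mono ?_ ?_ (fun y => ?_)
        · exact integrable_of_bdd (hpy.abs.mul hψ.abs) (C := M * B) (fun y => by
            rw [abs_mul, abs_abs, abs_abs]
            exact mul_le_mul (hpM _) (hψB y) (abs_nonneg _)
              (le_trans (abs_nonneg (p (x, y))) (hpM (x, y))))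
        · exact (integrable_of_bdd hpy (fun y => hpM _)).mul_const B
        · rw [abs_of_nonneg (hp_nonneg (x, y))]
          exact mul_le_mul_of_nonneg_left (hψB y) (hp_nonneg (x, y))
    _ = B := by rw [integral_mul_const, hp_int x, one_mul]

lemma doob_osc {ψ : S → ℝ} (hψ : Measurable ψ) {B : ℝ} (hψB : ∀ y, |ψ y| ≤ B)
    {c : ℝ} (hc : ∀ y y', ψ y - ψ y' ≤ c) (x x' : S) :
    (∫ y, p (x, y) * ψ y ∂μ) - (∫ y, p (x', y) * ψ y ∂μ)
      ≤ (1 - δ * (μ U₀).toReal) * c := by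
  set ind := U₀.indicator (fun _ => (1:ℝ)) with hind
  have hindm : Measurable ind := measurable_const.indicator hU₀
  have hind_bd : ∀ y, |ind y| ≤ 1 := fun y => by
    by_cases hy : y ∈ U₀ <;> simp [hind, Set.indicator_of_mem, Set.indicator_of_notMem, hy]
  set m := ⨅ z, ψ z with hm
  have hbdd : BddBelow (Set.range ψ) := ⟨-B, by
    rintro r ⟨z, rfl⟩
    exact (abs_le.1 (hψB z)).1⟩
  have hm_le : ∀ y, m ≤ ψ y := fun y => ciInf_le hbdd y
  have hle_m : ∀ y, ψ y ≤ m + c := fun y => by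
    have : ψ y - c ≤ m := le_ciInf (fun y' => by linarith [hc y y'])
    linarith
  -- integrability facts
  have hkψ : ∀ x₀ : S, Integrable (fun y => (p (x₀, y) - δ * ind y) * ψ y) μ := fun x₀ => by
    refine integrable_of_bdd ?_ (C := (M + δ) * B) (fun y => ?_)
    · exact (((hpm.comp (measurable_const.prodMk measurable_id)).sub
        (hindm.const_mul δ)).mul hψ)
    · rw [abs_mul]
      refine mul_le_mul (kk_abs_le hpm hpM hp_nonneg hp_int hU₀ hδ hp_low x₀ y) (hψB y)
        (abs_nonneg _) ?_
      have := hδ.le; have := le_trans (abs_nonneg (p (x₀,y))) (hpM (x₀,y)); linarith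
  have hiψ : Integrable (fun y => δ * ind y * ψ y) μ := by
    refine integrable_of_bdd ((hindm.const_mul δ).mul hψ) (C := δ * B) (fun y => ?_)
    rw [abs_mul, abs_mul, abs_of_nonneg hδ.le]
    have h1 : |ind y| * |ψ y| ≤ 1 * B :=
      mul_le_mul (hind_bd y) (hψB y) (abs_nonneg _) zero_le_one
    calc δ * |ind y| * |ψ y| = δ * (|ind y| * |ψ y|) := by ring
      _ ≤ δ * (1 * B) := mul_le_mul_of_nonneg_left h1 hδ.le
      _ = δ * B := by ring
  have hsplit : ∀ x₀ : S, ∫ y, p (x₀, y) * ψ y ∂μ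
      = (∫ y, (p (x₀, y) - δ * ind y) * ψ y ∂μ) + ∫ y, δ * ind y * ψ y ∂μ := by
    intro x₀
    rw [← integral_add (hkψ x₀) hiψ]
    congr 1; funext y; ring
  have hconst : ∀ (x₀ : S) (r : ℝ),
      ∫ y, (p (x₀, y) - δ * ind y) * r ∂μ = (1 - δ * (μ U₀).toReal) * r := by
    intro x₀ r
    rw [integral_mul_const, kk_int hpm hpM hp_nonneg hp_int hU₀ hδ hp_low x₀]
  have hkconst : ∀ (x₀ : S) (r : ℝ), Integrable (fun y => (p (x₀, y) - δ * ind y) * r) μ := by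
    intro x₀ r
    refine integrable_of_bdd ?_ (C := (M + δ) * |r|) (fun y => ?_)
    · exact ((hpm.comp (measurable_const.prodMk measurable_id)).sub
        (hindm.const_mul δ)).mul_const r
    · rw [abs_mul]
      exact mul_le_mul_of_nonneg_right
        (kk_abs_le hpm hpM hp_nonneg hp_int hU₀ hδ hp_low x₀ y) (abs_nonneg r)
  have hup : ∫ y, (p (x, y) - δ * ind y) * ψ y ∂μ ≤ (1 - δ * (μ U₀).toReal) * (m + c) := by
    rw [← hconst x (m + c)]
    refine integral_mono (hkψ x) (hkconst x (m + c)) (fun y => ?_)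
    exact mul_le_mul_of_nonneg_left (hle_m y)
      (kk_nonneg hpm hpM hp_nonneg hp_int hU₀ hδ hp_low x y)
  have hlo : (1 - δ * (μ U₀).toReal) * m ≤ ∫ y, (p (x', y) - δ * ind y) * ψ y ∂μ := by
    rw [← hconst x' m]
    refine integral_mono (hkconst x' m) (hkψ x') (fun y => ?_)
    exact mul_le_mul_of_nonneg_left (hm_le y)
      (kk_nonneg hpm hpM hp_nonneg hp_int hU₀ hδ hp_low x' y)
  have := hsplit x
  have := hsplit x'
  nlinarith [hup, hlo]
end DoobOsc

section More
set_option linter.unusedSectionVars false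
variable {S : Type*} [MeasurableSpace S] {μ : Measure S} [IsProbabilityMeasure μ]
  {p : S × S → ℝ} (hpm : Measurable p) {M : ℝ} (hpM : ∀ z, |p z| ≤ M)
  (hp_nonneg : ∀ z, 0 ≤ p z)

include hpm hpM hp_nonneg

lemma doobT_abs_le_int {g : S → ℝ} (hg : Measurable g) {C : ℝ} (hgC : ∀ x, |g x| ≤ C)
    (y : S) : |∫ x, p (x, y) * g x ∂μ| ≤ M * ∫ x, |g x| ∂μ := by
  have hpym : Measurable fun x => p (x, y) := hpm.comp (measurable_id.prodMk measurable_const)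
  calc |∫ x, p (x, y) * g x ∂μ| ≤ ∫ x, |p (x, y)| * |g x| ∂μ := by
        simpa [Real.norm_eq_abs] using
          norm_integral_le_integral_norm (fun x => p (x, y) * g x) (μ := μ)
    _ ≤ ∫ x, M * |g x| ∂μ := by
        refine integral_mono ?_ ?_ (fun x => ?_)
        · exact integrable_of_bdd (hpym.abs.mul hg.abs) (C := M * C) (fun x => by
            rw [abs_mul, abs_abs, abs_abs]
            exact mul_le_mul (hpM _) (hgC x) (abs_nonneg _)
              (le_trans (abs_nonneg (p (x, y))) (hpM (x, y))))
        · exact (integrable_of_bdd hg.abs (C := C) (fun x => by rw [abs_abs]; exact hgC x)).const_mul M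
        · exact mul_le_mul_of_nonneg_right (hpM _) (abs_nonneg _)
    _ = M * ∫ x, |g x| ∂μ := integral_const_mul _ _
end More



/-- Doob-type ergodic theorem, Thm 3.3.1 of Bensoussan–Lions–Papanicolaou:
under a uniform minorization condition `p(x,y) ≥ δ` for `y ∈ U₀`, there exists a unique
invariant probability measure `π`, and `Pⁿφ` converges to `∫ φ dπ` uniformly and
exponentially fast, with explicit constants `ρ = log(1/(1−δμ(U₀)))` and
`C = 2/(1−δμ(U₀))` independent of `φ`. -/
theorem stmt_0
    {S : Type*} [MetricSpace S] [CompactSpace S] [Nonempty S]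
    [MeasurableSpace S] [BorelSpace S]
    (μ : Measure S) [IsProbabilityMeasure μ]
    (p : S × S → ℝ) (hp_cont : Continuous p) (hp_nonneg : ∀ z, 0 ≤ p z)
    (hp_int : ∀ x : S, ∫ y, p (x, y) ∂μ = 1)
    (P : (S → ℝ) → (S → ℝ))
    (hP : ∀ (φ : S → ℝ) (x : S), P φ x = ∫ y, p (x, y) * φ y ∂μ)
    (U₀ : Set S) (hU₀ : MeasurableSet U₀)
    (δ : ℝ) (hδ : 0 < δ)
    (hδμ_pos : 0 < δ * (μ U₀).toReal) (hδμ_lt : δ * (μ U₀).toReal < 1)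
    (hp_low : ∀ x : S, ∀ y ∈ U₀, δ ≤ p (x, y)) :
    0 < Real.log (1 / (1 - δ * (μ U₀).toReal)) ∧
    ∃ π : Measure S, IsProbabilityMeasure π ∧
      (∀ E : Set S, MeasurableSet E →
        (π E).toReal = ∫ x, (∫ y in E, p (x, y) ∂μ) ∂π) ∧
      (∀ π' : Measure S, IsProbabilityMeasure π' →
        (∀ E : Set S, MeasurableSet E →
          (π' E).toReal = ∫ x, (∫ y in E, p (x, y) ∂μ) ∂π') → π' = π) ∧
      (∀ φ : S → ℝ, Measurable φ → (∃ M : ℝ, ∀ x, |φ x| ≤ M) →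
        ∀ n : ℕ, 1 ≤ n → ∀ x : S,
          |(P^[n] φ) x - ∫ y, φ y ∂π| ≤
            (2 / (1 - δ * (μ U₀).toReal)) * (⨆ z : S, |φ z|) *
              Real.exp (-(Real.log (1 / (1 - δ * (μ U₀).toReal))) * n)) := by
  classical
  have hpm : Measurable p := hp_cont.measurable
  -- bound on p
  obtain ⟨M₀, hM₀⟩ : BddAbove (Set.range p) := (isCompact_range hp_cont).bddAbove
  set M : ℝ := max M₀ 1 with hMdef
  have hM1 : (1:ℝ) ≤ M := le_max_right _ _
  have hM0 : (0:ℝ) < M := lt_of_lt_of_le one_pos hM1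
  have hpM : ∀ z, |p z| ≤ M := fun z => by
    rw [abs_of_nonneg (hp_nonneg z)]
    exact le_trans (hM₀ (Set.mem_range_self z)) (le_max_left _ _)
  set b : ℝ := 1 - δ * (μ U₀).toReal with hbdef
  have hb0 : 0 < b := by simp only [hbdef]; linarith
  have hb1 : b < 1 := by simp only [hbdef]; linarith
  have hρ : 0 < Real.log (1 / b) := Real.log_pos (by rw [lt_div_iff₀ hb0]; linarith)
  have hexp : ∀ n : ℕ, Real.exp (-(Real.log (1 / b)) * n) = b ^ n := by
    intro n
    rw [one_div, Real.log_inv, neg_neg, mul_comm, Real.exp_nat_mul, Real.exp_log hb0]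
  refine ⟨hρ, ?_⟩
  -- the iterates fₙ = Tⁿ 1
  set f : ℕ → S → ℝ := fun n => (doobT μ p)^[n] (fun _ => (1:ℝ)) with hfdef
  have hf_succ : ∀ n, f (n + 1) = doobT μ p (f n) := fun n => by
    simp only [hfdef]; rw [Function.iterate_succ_apply']
  have hfP : ∀ n, Measurable (f n) ∧ (∀ x, 0 ≤ f n x) ∧ (∀ x, |f n x| ≤ M)
      ∧ (∫ x, f n x ∂μ = 1) := by
    intro n
    induction n with
    | zero =>
      have hf0 : f 0 = fun _ => (1:ℝ) := rfl
      rw [hf0]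
      exact ⟨measurable_const, fun x => zero_le_one, fun x => by rw [abs_one]; exact hM1,
        by simp⟩
    | succ n ih =>
      obtain ⟨hm, h0, hbd, hi⟩ := ih
      rw [hf_succ n]
      refine ⟨doobT_meas hpm hpM hm, fun x => doobT_nonneg hpm hpM hp_nonneg h0 x, fun x => ?_,
        by rw [doobT_integral hpm hpM hp_int hm hbd, hi]⟩
      rw [abs_of_nonneg (doobT_nonneg hpm hpM hp_nonneg h0 x)]
      calc doobT μ p (f n) x ≤ M * ∫ x, f n x ∂μ := doobT_le_of_int hpm hpM hp_nonneg hm h0 hbd x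
        _ = M := by rw [hi, mul_one]
  -- increments
  set g : ℕ → S → ℝ := fun n x => f (n + 1) x - f n x with hgdef
  have hg_meas : ∀ n, Measurable (g n) := fun n => ((hfP (n+1)).1).sub ((hfP n).1)
  have hg_bd : ∀ n x, |g n x| ≤ 2 * M := fun n x => by
    have h1 := (hfP (n+1)).2.2.1 x
    have h2 := (hfP n).2.2.1 x
    calc |g n x| ≤ |f (n+1) x| + |f n x| := abs_sub _ _
      _ ≤ 2 * M := by linarith
  have hg_int0 : ∀ n, ∫ x, g n x ∂μ = 0 := fun n => by
    simp only [hgdef]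
    rw [integral_sub (integrable_of_bdd ((hfP (n+1)).1) ((hfP (n+1)).2.2.1))
      (integrable_of_bdd ((hfP n).1) ((hfP n).2.2.1)), (hfP (n+1)).2.2.2, (hfP n).2.2.2,
      sub_self]
  have hg_succ : ∀ n, g (n + 1) = doobT μ p (g n) := by
    intro n
    funext y
    have := doobT_sub (μ := μ) hpm hpM ((hfP (n+1)).1) ((hfP n).1) ((hfP (n+1)).2.2.1)
      ((hfP n).2.2.1) y
    have e1 : f (n+1+1) y = doobT μ p (f (n+1)) y := by rw [hf_succ (n+1)]
    have e2 : f (n+1) y = doobT μ p (f n) y := by rw [hf_succ n]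
    simp only [hgdef]
    rw [e1, e2]
    exact this.symm
  have hL1 : ∀ n, ∫ x, |g n x| ∂μ ≤ b ^ n * (2 * M) := by
    intro n
    induction n with
    | zero =>
      simp only [pow_zero, one_mul]
      calc ∫ x, |g 0 x| ∂μ ≤ ∫ _x, 2 * M ∂μ :=
            integral_mono (integrable_of_bdd (hg_meas 0).abs (C := 2*M)
              (fun x => by rw [abs_abs]; exact hg_bd 0 x)) (integrable_const _)
              (fun x => hg_bd 0 x)
        _ = 2 * M := by simp
    | succ n ih =>
      rw [hg_succ n]
      calc ∫ y, |doobT μ p (g n) y| ∂μ ≤ b * ∫ x, |g n x| ∂μ :=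
            doobT_contract hpm hpM hp_nonneg hp_int hU₀ hδ hp_low (hg_meas n) (hg_bd n)
              (hg_int0 n)
        _ ≤ b * (b ^ n * (2 * M)) := mul_le_mul_of_nonneg_left ih hb0.le
        _ = b ^ (n+1) * (2 * M) := by ring
  set C0 : ℝ := max (2 * M) (M * (2 * M) / b) with hC0def
  have hSup : ∀ n y, |g n y| ≤ C0 * b ^ n := by
    intro n y
    cases n with
    | zero =>
      have h1 : (2*M) ≤ C0 := le_max_left _ _
      simpa [pow_zero] using le_trans (hg_bd 0 y) h1
    | succ n =>
      have h1 : |g (n+1) y| ≤ M * ∫ x, |g n x| ∂μ := by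
        rw [hg_succ n]
        exact doobT_abs_le_int hpm hpM hp_nonneg (hg_meas n) (hg_bd n) y
      calc |g (n+1) y| ≤ M * (b ^ n * (2 * M)) :=
            le_trans h1 (mul_le_mul_of_nonneg_left (hL1 n) hM0.le)
        _ = (M * (2 * M) / b) * b ^ (n+1) := by field_simp; ring
        _ ≤ C0 * b ^ (n+1) := mul_le_mul_of_nonneg_right (le_max_right _ _)
            (pow_nonneg hb0.le _)
  -- limit h
  have hcauchy : ∀ y, ∃ l, Filter.Tendsto (fun n => f n y) Filter.atTop (nhds l) := by
    intro y
    refine cauchySeq_tendsto_of_complete ?_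
    refine cauchySeq_of_le_geometric b C0 hb1 (fun n => ?_)
    rw [Real.dist_eq, abs_sub_comm]
    exact hSup n y
  choose h hh using hcauchy
  have hhm : Measurable h := by
    refine measurable_of_tendsto_metrizable (fun n => (hfP n).1) ?_
    rw [tendsto_pi_nhds]
    exact hh
  have hh0 : ∀ y, 0 ≤ h y := fun y =>
    ge_of_tendsto (hh y) (Filter.Eventually.of_forall fun n => (hfP n).2.1 y)
  have hhM : ∀ y, |h y| ≤ M := fun y => by
    rw [abs_of_nonneg (hh0 y)]
    exact le_of_tendsto (hh y) (Filter.Eventually.of_forall fun n => by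
      have := (hfP n).2.2.1 y
      rw [abs_of_nonneg ((hfP n).2.1 y)] at this
      exact this)
  have hhint : ∫ y, h y ∂μ = 1 := by
    have ht : Filter.Tendsto (fun n => ∫ y, f n y ∂μ) Filter.atTop (nhds (∫ y, h y ∂μ)) := by
      refine tendsto_integral_of_dominated_convergence (fun _ => M)
        (fun n => ((hfP n).1).aestronglyMeasurable) (integrable_const M)
        (fun n => ae_of_all _ fun y => by simpa [Real.norm_eq_abs] using (hfP n).2.2.1 y)
        (ae_of_all _ fun y => hh y)
    have ht2 : Filter.Tendsto (fun n : ℕ => (1:ℝ)) Filter.atTop (nhds (∫ y, h y ∂μ)) := by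
      simpa only [fun n => (hfP n).2.2.2] using ht
    exact tendsto_nhds_unique ht2 tendsto_const_nhds
  have hfix : ∀ y, doobT μ p h y = h y := by
    intro y
    have t1 : Filter.Tendsto (fun n => doobT μ p (f n) y) Filter.atTop
        (nhds (doobT μ p h y)) := by
      refine tendsto_integral_of_dominated_convergence (fun _ => M * M)
        (fun n => ((hpm.comp (measurable_id.prodMk measurable_const)).mul
          ((hfP n).1)).aestronglyMeasurable) (integrable_const _)
        (fun n => ae_of_all _ fun x => ?_) (ae_of_all _ fun x => ?_)
      · rw [Real.norm_eq_abs, abs_mul]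
        exact mul_le_mul (hpM _) ((hfP n).2.2.1 x) (abs_nonneg _)
          (le_trans (abs_nonneg (p (x, y))) (hpM (x, y)))
      · exact (hh x).const_mul _
    have t3 : Filter.Tendsto (fun n => doobT μ p (f n) y) Filter.atTop (nhds (h y)) := by
      have : (fun n => doobT μ p (f n) y) = fun n => f (n + 1) y := by
        funext n; rw [hf_succ n]
      rw [this]
      exact (hh y).comp (Filter.tendsto_add_atTop_nat 1)
    exact tendsto_nhds_unique t1 t3
  -- the invariant measure
  set π : Measure S := μ.withDensity (fun y => ((h y).toNNReal : ENNReal)) with hπdef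
  have hdm : Measurable fun y => (h y).toNNReal := hhm.real_toNNReal
  have hπf : ∀ F : S → ℝ, ∫ x, F x ∂π = ∫ x, h x * F x ∂μ := by
    intro F
    rw [hπdef, integral_withDensity_eq_integral_smul hdm F]
    congr 1
    funext x
    rw [NNReal.smul_def, Real.coe_toNNReal _ (hh0 x), smul_eq_mul]
  have hofReal : (fun y => ((h y).toNNReal : ENNReal)) = fun y => ENNReal.ofReal (h y) := rfl
  have hπ_prob : IsProbabilityMeasure π := by
    constructor
    rw [hπdef, withDensity_apply _ MeasurableSet.univ, Measure.restrict_univ, hofReal,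
      ← ofReal_integral_eq_lintegral_ofReal (integrable_of_bdd hhm hhM)
        (ae_of_all _ hh0), hhint, ENNReal.ofReal_one]
  refine ⟨π, hπ_prob, ?_, ?_, ?_⟩
  -- Clause 1 : invariance
  · intro E hE
    have hπE : (π E).toReal = ∫ y in E, h y ∂μ := by
      have h1 : π E = ENNReal.ofReal (∫ y in E, h y ∂μ) := by
        rw [hπdef, withDensity_apply _ hE, hofReal,
          ← ofReal_integral_eq_lintegral_ofReal ((integrable_of_bdd hhm hhM).restrict)
            (ae_of_all _ hh0)]
      rw [h1, ENNReal.toReal_ofReal (integral_nonneg hh0)]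
    have hswap := swap_int (f := fun x y => h x * p (x, y)) μ (μ.restrict E)
      ((hhm.comp measurable_fst).mul hpm) (C := M * M) (fun x y => by
        rw [abs_mul]
        exact mul_le_mul (hhM x) (hpM _) (abs_nonneg _) (le_trans (abs_nonneg _) (hhM x)))
    calc (π E).toReal = ∫ y in E, h y ∂μ := hπE
      _ = ∫ y in E, doobT μ p h y ∂μ :=
          (integral_congr_ae (ae_of_all _ fun y => (hfix y).symm))
      _ = ∫ y in E, ∫ x, h x * p (x, y) ∂μ ∂μ := by
          refine integral_congr_ae (ae_of_all _ fun y => ?_)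
          simp only [doobT]
          congr 1; funext x; ring
      _ = ∫ x, ∫ y in E, h x * p (x, y) ∂μ ∂μ := hswap.symm
      _ = ∫ x, h x * ∫ y in E, p (x, y) ∂μ ∂μ := by
          refine integral_congr_ae (ae_of_all _ fun x => ?_)
          dsimp only
          rw [integral_const_mul]
      _ = ∫ x, (∫ y in E, p (x, y) ∂μ) ∂π := (hπf _).symm
  -- Clause 2 : uniqueness
  · intro π' hπ'p hπ'inv
    haveI := hπ'p
    set q : S → ℝ := fun y => ∫ x, p (x, y) ∂π' with hqdef
    have hqm : Measurable q :=
      (MeasureTheory.StronglyMeasurable.integral_prod_left' (μ := π')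
        hpm.stronglyMeasurable).measurable
    have hq0 : ∀ y, 0 ≤ q y := fun y => integral_nonneg fun x => hp_nonneg _
    have hqM : ∀ y, |q y| ≤ M := fun y => abs_integral_le_of_bdd (fun x => hpM _)
    have hq_repr : ∀ E : Set S, MeasurableSet E → (π' E).toReal = ∫ y in E, q y ∂μ := by
      intro E hE
      rw [hπ'inv E hE]
      exact swap_int (f := fun x y => p (x, y)) π' (μ.restrict E) hpm (fun x y => hpM _)
    have hπ'_eq : π' = μ.withDensity (fun y => ((q y).toNNReal : ENNReal)) := by
      ext E hE
      have h1 : π' E = ENNReal.ofReal ((π' E).toReal) :=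
        (ENNReal.ofReal_toReal (measure_ne_top π' E)).symm
      have h2 : (fun y => ((q y).toNNReal : ENNReal)) = fun y => ENNReal.ofReal (q y) := rfl
      rw [h1, hq_repr E hE, withDensity_apply _ hE, h2,
        ofReal_integral_eq_lintegral_ofReal ((integrable_of_bdd hqm hqM).restrict)
          (ae_of_all _ hq0)]
    have hq_int : ∫ y, q y ∂μ = 1 := by
      have h2 := hq_repr Set.univ MeasurableSet.univ
      simp only [measure_univ, ENNReal.toReal_one, Measure.restrict_univ] at h2
      exact h2.symm
    have hq_fix : ∀ y, doobT μ p q y = q y := by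
      intro y
      calc doobT μ p q y = ∫ x, q x * p (x, y) ∂μ := by
            simp only [doobT]
            refine integral_congr_ae (ae_of_all _ fun x => ?_)
            ring
        _ = ∫ x, p (x, y) ∂π' := by
            rw [hπ'_eq, integral_withDensity_eq_integral_smul hqm.real_toNNReal
              (fun x => p (x, y))]
            refine integral_congr_ae (ae_of_all _ fun x => ?_)
            dsimp only
            rw [NNReal.smul_def, Real.coe_toNNReal _ (hq0 x), smul_eq_mul]
        _ = q y := rfl
    have hdiff_meas : Measurable fun x => q x - h x := hqm.sub hhm
    have hdiff_bd : ∀ x, |q x - h x| ≤ 2 * M := fun x => by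
      have h1 := hqM x; have h2 := hhM x
      calc |q x - h x| ≤ |q x| + |h x| := abs_sub _ _
        _ ≤ 2 * M := by linarith
    have hdiff_int : ∫ x, (q x - h x) ∂μ = 0 := by
      rw [integral_sub (integrable_of_bdd hqm hqM) (integrable_of_bdd hhm hhM), hq_int,
        hhint, sub_self]
    have hdiff_fix : ∀ y, doobT μ p (fun x => q x - h x) y = q y - h y := fun y => by
      rw [doobT_sub (μ := μ) hpm hpM hqm hhm hqM hhM y, hq_fix y, hfix y]
    have hcontr := doobT_contract hpm hpM hp_nonneg hp_int hU₀ hδ hp_low hdiff_meas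
      hdiff_bd hdiff_int
    have hrw2 : ∫ y, |doobT μ p (fun x => q x - h x) y| ∂μ = ∫ y, |q y - h y| ∂μ :=
      integral_congr_ae (ae_of_all _ fun y => by dsimp only; rw [hdiff_fix y])
    rw [hrw2, ← hbdef] at hcontr
    have hI0 : ∫ y, |q y - h y| ∂μ = 0 := by
      have hnn : 0 ≤ ∫ y, |q y - h y| ∂μ := integral_nonneg fun y => abs_nonneg _
      nlinarith
    have hae : (fun y => q y - h y) =ᵐ[μ] 0 := by
      have hin : Integrable (fun y => |q y - h y|) μ :=
        (integrable_of_bdd hdiff_meas hdiff_bd).abs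
      have h3 := (integral_eq_zero_iff_of_nonneg (fun y => abs_nonneg _) hin).1 hI0
      filter_upwards [h3] with y hy
      exact abs_eq_zero.mp hy
    rw [hπ'_eq, hπdef]
    refine withDensity_congr_ae ?_
    filter_upwards [hae] with y hy
    have hqh : q y = h y := sub_eq_zero.mp hy
    rw [hqh]
  -- Clause 3 : exponential convergence
  · intro φ hφm hφbdd n hn x
    obtain ⟨B₀, hB₀⟩ := hφbdd
    set K : ℝ := ⨆ z : S, |φ z| with hKdef
    have hbddK : BddAbove (Set.range fun z => |φ z|) := ⟨B₀, by
      rintro r ⟨z, rfl⟩; exact hB₀ z⟩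
    have hK : ∀ y, |φ y| ≤ K := fun y => le_ciSup hbddK y
    have hK0 : 0 ≤ K := le_trans (abs_nonneg _) (hK x)
    haveI : IsProbabilityMeasure π := hπ_prob
    have hQ : ∀ m : ℕ, Measurable (P^[m] φ) ∧ (∀ y, |(P^[m] φ) y| ≤ K)
        ∧ (∫ y, (P^[m] φ) y ∂π = ∫ y, φ y ∂π)
        ∧ (∀ x₁ x₂ : S, (P^[m] φ) x₁ - (P^[m] φ) x₂ ≤ b ^ m * (2 * K)) := by
      intro m
      induction m with
      | zero =>
        refine ⟨hφm, hK, rfl, fun x₁ x₂ => ?_⟩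
        simp only [Function.iterate_zero, id_eq, pow_zero, one_mul]
        have h1 := abs_le.1 (hK x₁); have h2 := abs_le.1 (hK x₂)
        linarith [h1.1, h1.2, h2.1, h2.2]
      | succ m ih =>
        obtain ⟨hm, hbd, hinv, hosc⟩ := ih
        have hPeq : P^[m+1] φ = fun x => ∫ y, p (x, y) * (P^[m] φ) y ∂μ := by
          rw [Function.iterate_succ_apply']
          exact funext (hP (P^[m] φ))
        rw [hPeq]
        have hswap := swap_int (f := fun x' y => h x' * (p (x', y) * (P^[m] φ) y)) μ μ
          ((hhm.comp measurable_fst).mul (hpm.mul (hm.comp measurable_snd)))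
          (C := M * (M * K)) (fun x' y => by
            rw [abs_mul, abs_mul]
            refine mul_le_mul (hhM x') (mul_le_mul (hpM _) (hbd y) (abs_nonneg _)
              (le_trans (abs_nonneg (p (x', y))) (hpM (x', y))))
              (mul_nonneg (abs_nonneg _) (abs_nonneg _))
              (le_trans (abs_nonneg (h x')) (hhM x')))
        refine ⟨?_, ?_, ?_, ?_⟩
        · exact (hpm.mul (hm.comp
            measurable_snd)).stronglyMeasurable.integral_prod_right'.measurable
        · exact fun y => doobP_abs_le hpm hpM hp_nonneg hp_int hU₀ hδ hp_low hm hbd y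
        · calc ∫ x', (∫ y, p (x', y) * (P^[m] φ) y ∂μ) ∂π
              = ∫ x', h x' * ∫ y, p (x', y) * (P^[m] φ) y ∂μ ∂μ := hπf _
            _ = ∫ x', ∫ y, h x' * (p (x', y) * (P^[m] φ) y) ∂μ ∂μ := by
                refine integral_congr_ae (ae_of_all _ fun x' => ?_)
                dsimp only
                rw [integral_const_mul]
            _ = ∫ y, ∫ x', h x' * (p (x', y) * (P^[m] φ) y) ∂μ ∂μ := hswap
            _ = ∫ y, h y * (P^[m] φ) y ∂μ := by
                refine integral_congr_ae (ae_of_all _ fun y => ?_)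
                have e1 : ∫ x', h x' * (p (x', y) * (P^[m] φ) y) ∂μ
                    = (∫ x', p (x', y) * h x' ∂μ) * (P^[m] φ) y := by
                  rw [← integral_mul_const]
                  refine integral_congr_ae (ae_of_all _ fun x' => ?_)
                  ring
                dsimp only
                rw [e1]
                have e2 : ∫ x', p (x', y) * h x' ∂μ = h y := hfix y
                rw [e2]
            _ = ∫ y, (P^[m] φ) y ∂π := (hπf _).symm
            _ = ∫ y, φ y ∂π := hinv
        · intro x₁ x₂
          have hstep := doob_osc hpm hpM hp_nonneg hp_int hU₀ hδ hp_low hm hbd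
            (c := b ^ m * (2 * K)) hosc x₁ x₂
          rw [← hbdef] at hstep
          calc (∫ y, p (x₁, y) * (P^[m] φ) y ∂μ) - ∫ y, p (x₂, y) * (P^[m] φ) y ∂μ
              ≤ b * (b ^ m * (2 * K)) := hstep
            _ = b ^ (m + 1) * (2 * K) := by ring
    obtain ⟨hm, hbd, hinv, hosc⟩ := hQ n
    have hint : Integrable (P^[n] φ) π := integrable_of_bdd hm hbd
    have heq : ∫ x', ((P^[n] φ) x - (P^[n] φ) x') ∂π = (P^[n] φ) x - ∫ y, φ y ∂π := by
      rw [integral_sub (integrable_const _) hint, hinv, integral_const]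
      simp
    rw [← heq]
    have habs : ∀ x', |(P^[n] φ) x - (P^[n] φ) x'| ≤ b ^ n * (2 * K) :=
      fun x' => abs_le.2 ⟨by linarith [hosc x' x], hosc x x'⟩
    calc |∫ x', ((P^[n] φ) x - (P^[n] φ) x') ∂π| ≤ b ^ n * (2 * K) :=
          abs_integral_le_of_bdd habs
      _ ≤ 2 / b * K * Real.exp (-Real.log (1 / b) * ↑n) := by
          rw [hexp n]
          have h2b : (2:ℝ) ≤ 2 / b := by rw [le_div_iff₀ hb0]; nlinarith
          have hbn : (0:ℝ) ≤ b ^ n := pow_nonneg hb0.le n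
          have hh2 := mul_le_mul_of_nonneg_right h2b (mul_nonneg hK0 hbn)
          nlinarith [hh2]
end

section
/- If φ : S → ℝ is a bounded measurable function with ∫_S φ dπ = 0, where π is the unique invariant probability measure of P, then the series Σ_{n=0}^∞ (Pⁿφ)(x) converges absolutely for every x ∈ S, and moreover sup_{x∈S} Σ_{n=0}^∞ |(Pⁿφ)(x)| < ∞. -/
open MeasureTheory

-- integrability from boundedness, finite measure
lemma aux_integrable {α : Type*} [MeasurableSpace α] (ν : Measure α) [IsFiniteMeasure ν]
    {f : α → ℝ} (hf : Measurable f) (C : ℝ) (hC : ∀ x, |f x| ≤ C) : Integrable f ν :=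
  (integrable_const C).mono' hf.aestronglyMeasurable
    (Filter.Eventually.of_forall fun x => by simpa [Real.norm_eq_abs] using hC x)

section aux
variable {S : Type*} [MetricSpace S] [CompactSpace S] [Nonempty S]
    [MeasurableSpace S] [BorelSpace S]
    (μ : Measure S) [IsProbabilityMeasure μ]
    (p : S × S → ℝ)

-- measurability of Pψ
lemma meas_P (hp_cont : Continuous p) {ψ : S → ℝ} (hψ : Measurable ψ) :
    Measurable fun x => ∫ y, p (x, y) * ψ y ∂μ := by
  have h : StronglyMeasurable fun z : S × S => p z * ψ z.2 :=
    (hp_cont.measurable.mul (hψ.comp measurable_snd)).stronglyMeasurable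
  exact h.integral_prod_right'.measurable

-- bound on Pψ
lemma bound_P (hp_cont : Continuous p) (hp_nonneg : ∀ z, 0 ≤ p z) (hp_int : ∀ x : S, ∫ y, p (x, y) ∂μ = 1)
    {ψ : S → ℝ} (hψ : Measurable ψ) {M : ℝ} (hM : ∀ y, |ψ y| ≤ M) (x : S) :
    |∫ y, p (x, y) * ψ y ∂μ| ≤ M := by
  obtain ⟨z₀, -, hz₀'⟩ := isCompact_univ.exists_isMaxOn ⟨(x, x), trivial⟩ hp_cont.continuousOn
  have hz₀ : ∀ z, p z ≤ p z₀ := fun z => hz₀' trivial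
  set C := p z₀ with hCdef
  have hpx_cont : Continuous fun y => p (x, y) := hp_cont.comp (Continuous.prodMk_right x)
  have hMnn : 0 ≤ M := le_trans (abs_nonneg _) (hM (Classical.arbitrary S))
  have hint1 : Integrable (fun y => p (x, y) * ψ y) μ :=
    aux_integrable μ (hpx_cont.measurable.mul hψ) (C * M) (fun y => by
      rw [abs_mul, abs_of_nonneg (hp_nonneg _)]
      exact mul_le_mul (hz₀ (x, y)) (hM y) (abs_nonneg _) (le_trans (hp_nonneg (x,y)) (hz₀ (x,y))))
  have hint2 : Integrable (fun y => p (x, y) * M) μ :=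
    aux_integrable μ (hpx_cont.measurable.mul measurable_const) (C * M) (fun y => by
      rw [abs_mul, abs_of_nonneg (hp_nonneg _), abs_of_nonneg hMnn]
      exact mul_le_mul_of_nonneg_right (hz₀ (x, y)) hMnn)
  calc |∫ y, p (x, y) * ψ y ∂μ| ≤ ∫ y, |p (x, y) * ψ y| ∂μ := by
        simpa [Real.norm_eq_abs, abs_mul] using
          norm_integral_le_integral_norm (μ := μ) (fun y => p (x, y) * ψ y)
    _ ≤ ∫ y, p (x, y) * M ∂μ := by
        refine integral_mono hint1.abs hint2 fun y => ?_
        rw [abs_mul, abs_of_nonneg (hp_nonneg (x, y))]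
        exact mul_le_mul_of_nonneg_left (hM y) (hp_nonneg (x, y))
    _ = M := by rw [integral_mul_const, hp_int, one_mul]
end aux

section aux2
variable {S : Type*} [MetricSpace S] [CompactSpace S] [Nonempty S]
    [MeasurableSpace S] [BorelSpace S]
    (μ : Measure S) [IsProbabilityMeasure μ]
    (p : S × S → ℝ)

lemma contraction_P (hp_cont : Continuous p) (hp_nonneg : ∀ z, 0 ≤ p z)
    (hp_int : ∀ x : S, ∫ y, p (x, y) ∂μ = 1)
    (U₀ : Set S) (hU₀ : MeasurableSet U₀) (δ : ℝ) (hδ : 0 < δ)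
    (hp_low : ∀ x : S, ∀ y ∈ U₀, δ ≤ p (x, y))
    {ψ : S → ℝ} (hψ : Measurable ψ) {m M : ℝ} (hm : ∀ y, m ≤ ψ y) (hM : ∀ y, ψ y ≤ M)
    (x₁ x₂ : S) :
    (∫ y, p (x₁, y) * ψ y ∂μ) - (∫ y, p (x₂, y) * ψ y ∂μ)
      ≤ (1 - δ * (μ U₀).toReal) * (M - m) := by
  obtain ⟨z₀, -, hz₀'⟩ := isCompact_univ.exists_isMaxOn ⟨(x₁, x₁), trivial⟩ hp_cont.continuousOn
  have hz₀ : ∀ z, p z ≤ p z₀ := fun z => hz₀' trivial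
  set C := p z₀ with hCdef
  have hC0 : 0 ≤ C := le_trans (hp_nonneg _) (hz₀ (x₁, x₁))
  set q : S → ℝ := fun y => min (p (x₁, y)) (p (x₂, y)) with hqdef
  have hq_cont : Continuous q :=
    (hp_cont.comp (Continuous.prodMk_right x₁)).min (hp_cont.comp (Continuous.prodMk_right x₂))
  have hq_nonneg : ∀ y, 0 ≤ q y := fun y => le_min (hp_nonneg _) (hp_nonneg _)
  have hq_le₁ : ∀ y, q y ≤ p (x₁, y) := fun y => min_le_left _ _
  have hq_le₂ : ∀ y, q y ≤ p (x₂, y) := fun y => min_le_right _ _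
  have hq_leC : ∀ y, |q y| ≤ C := fun y => by
    rw [abs_of_nonneg (hq_nonneg y)]; exact le_trans (hq_le₁ y) (hz₀ _)
  have hq_int : Integrable q μ := aux_integrable μ hq_cont.measurable C hq_leC
  -- pointwise bound on ψ: |ψ| ≤ max |m| |M|
  have hψ_bdd : ∀ y, |ψ y| ≤ max |m| |M| := fun y =>
    abs_le.2 ⟨le_trans (neg_le_neg (le_max_left _ _)) (le_trans (neg_abs_le m) (hm y)),
      le_trans (hM y) (le_trans (le_abs_self M) (le_max_right _ _))⟩
  set K := max |m| |M| with hKdef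
  have hK0 : 0 ≤ K := le_trans (abs_nonneg _) (hψ_bdd (Classical.arbitrary S))
  have hmM : m ≤ M := le_trans (hm (Classical.arbitrary S)) (hM (Classical.arbitrary S))
  -- generic integrability
  have hint : ∀ (f : S → ℝ), Measurable f → (∀ y, |f y| ≤ C) →
      Integrable (fun y => f y * ψ y) μ := fun f hf hfC =>
    aux_integrable μ (hf.mul hψ) (C * K) (fun y => by
      rw [abs_mul]
      exact mul_le_mul (hfC y) (hψ_bdd y) (abs_nonneg _) hC0)
  have hp₁meas : Measurable fun y => p (x₁, y) := (hp_cont.comp (Continuous.prodMk_right x₁)).measurable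
  have hp₂meas : Measurable fun y => p (x₂, y) := (hp_cont.comp (Continuous.prodMk_right x₂)).measurable
  have hp₁C : ∀ y, |p (x₁, y)| ≤ C := fun y => by
    rw [abs_of_nonneg (hp_nonneg _)]; exact hz₀ _
  have hp₂C : ∀ y, |p (x₂, y)| ≤ C := fun y => by
    rw [abs_of_nonneg (hp_nonneg _)]; exact hz₀ _
  have hp₁int : Integrable (fun y => p (x₁, y)) μ := aux_integrable μ hp₁meas C hp₁C
  have hp₂int : Integrable (fun y => p (x₂, y)) μ := aux_integrable μ hp₂meas C hp₂C
  set I := ∫ y, q y ∂μ with hIdef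
  -- δ μ(U₀) ≤ I
  have hI_ge : δ * (μ U₀).toReal ≤ I := by
    have h1 : ∫ y in U₀, (δ : ℝ) ∂μ = δ * (μ U₀).toReal := by
      rw [setIntegral_const, smul_eq_mul, mul_comm]; rfl
    have h2 : ∫ y in U₀, (δ : ℝ) ∂μ ≤ ∫ y in U₀, q y ∂μ := by
      refine setIntegral_mono_on (integrableOn_const (measure_ne_top μ U₀))
        hq_int.integrableOn hU₀ (fun y hy => le_min (hp_low x₁ y hy) (hp_low x₂ y hy))
    have h3 : ∫ y in U₀, q y ∂μ ≤ I :=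
      setIntegral_le_integral hq_int (Filter.Eventually.of_forall hq_nonneg)
    linarith [h1 ▸ h2]
  have hI_le1 : ∀ x' : S, (hx : ∀ y, q y ≤ p (x', y)) → I ≤ 1 := fun x' hx => by
    rw [← hp_int x']
    exact integral_mono hq_int (aux_integrable μ
      ((hp_cont.comp (Continuous.prodMk_right x')).measurable) C (fun y => by
        rw [abs_of_nonneg (hp_nonneg _)]; exact hz₀ _)) hx
  -- split
  have split : ∀ x' : S, (∀ y, q y ≤ p (x', y)) →
      ∫ y, p (x', y) * ψ y ∂μ = (∫ y, (p (x', y) - q y) * ψ y ∂μ) + ∫ y, q y * ψ y ∂μ := by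
    intro x' hx
    have hmeas' : Measurable fun y => p (x', y) := (hp_cont.comp (Continuous.prodMk_right x')).measurable
    rw [← integral_add (hint (fun y => p (x', y) - q y) (hmeas'.sub hq_cont.measurable)
      (fun y => by
        rw [abs_of_nonneg (sub_nonneg.2 (hx y))]
        exact le_trans (sub_le_self _ (hq_nonneg y)) (hz₀ _)))
      (hint _ hq_cont.measurable hq_leC)]
    congr 1; funext y; ring
  -- upper estimate for x₁ part
  have hup : ∫ y, (p (x₁, y) - q y) * ψ y ∂μ ≤ (1 - I) * M := by
    have h1 : ∫ y, (p (x₁, y) - q y) * ψ y ∂μ ≤ ∫ y, (p (x₁, y) - q y) * M ∂μ := by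
      refine integral_mono (hint _ (hp₁meas.sub hq_cont.measurable) (fun y => by
        rw [abs_of_nonneg (sub_nonneg.2 (hq_le₁ y))]
        exact le_trans (sub_le_self _ (hq_nonneg y)) (hz₀ _)))
        ?_ (fun y => mul_le_mul_of_nonneg_left (hM y) (sub_nonneg.2 (hq_le₁ y)))
      exact ((hp₁int.sub hq_int).mul_const M)
    have h2 : ∫ y, (p (x₁, y) - q y) * M ∂μ = (1 - I) * M := by
      rw [integral_mul_const, integral_sub hp₁int hq_int, hp_int]
    linarith
  have hdown : (1 - I) * m ≤ ∫ y, (p (x₂, y) - q y) * ψ y ∂μ := by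
    have h1 : ∫ y, (p (x₂, y) - q y) * m ∂μ ≤ ∫ y, (p (x₂, y) - q y) * ψ y ∂μ := by
      refine integral_mono ((hp₂int.sub hq_int).mul_const m)
        (hint _ (hp₂meas.sub hq_cont.measurable) (fun y => by
          rw [abs_of_nonneg (sub_nonneg.2 (hq_le₂ y))]
          exact le_trans (sub_le_self _ (hq_nonneg y)) (hz₀ _)))
        (fun y => mul_le_mul_of_nonneg_left (hm y) (sub_nonneg.2 (hq_le₂ y)))
      done
    have h2 : ∫ y, (p (x₂, y) - q y) * m ∂μ = (1 - I) * m := by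
      rw [integral_mul_const, integral_sub hp₂int hq_int, hp_int]
    linarith
  have hfinal : (1 - I) * (M - m) ≤ (1 - δ * (μ U₀).toReal) * (M - m) :=
    mul_le_mul_of_nonneg_right (by linarith) (by linarith)
  calc (∫ y, p (x₁, y) * ψ y ∂μ) - (∫ y, p (x₂, y) * ψ y ∂μ)
      = (∫ y, (p (x₁, y) - q y) * ψ y ∂μ) - ∫ y, (p (x₂, y) - q y) * ψ y ∂μ := by
        rw [split x₁ hq_le₁, split x₂ hq_le₂]; ring
    _ ≤ (1 - I) * M - (1 - I) * m := by linarith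
    _ = (1 - I) * (M - m) := by ring
    _ ≤ _ := hfinal

end aux2

section aux3
variable {S : Type*} [MetricSpace S] [CompactSpace S] [Nonempty S]
    [MeasurableSpace S] [BorelSpace S]
    (μ : Measure S) [IsProbabilityMeasure μ]
    (p : S × S → ℝ)

open ENNReal in
lemma inv_lintegral (hp_cont : Continuous p) (hp_nonneg : ∀ z, 0 ≤ p z)
    (hp_int : ∀ x : S, ∫ y, p (x, y) ∂μ = 1)
    (π : Measure S) (hπ_prob : IsProbabilityMeasure π)
    (hπ_inv : ∀ E : Set S, MeasurableSet E →
      (π E).toReal = ∫ x, (∫ y in E, p (x, y) ∂μ) ∂π)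
    {g : S → ℝ≥0∞} (hg : Measurable g) :
    ∫⁻ x, ∫⁻ y, ENNReal.ofReal (p (x, y)) * g y ∂μ ∂π = ∫⁻ y, g y ∂π := by
  haveI := hπ_prob
  obtain ⟨z₀, -, hz₀'⟩ := isCompact_univ.exists_isMaxOn
    ⟨(Classical.arbitrary S, Classical.arbitrary S), trivial⟩ hp_cont.continuousOn
  have hz₀ : ∀ z, p z ≤ p z₀ := fun z => hz₀' trivial
  set C := p z₀ with hCdef
  have hq_meas : Measurable fun z : S × S => ENNReal.ofReal (p z) :=
    hp_cont.measurable.ennreal_ofReal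
  have hqx_meas : ∀ x : S, Measurable fun y => ENNReal.ofReal (p (x, y)) := fun x =>
    ((hp_cont.comp (Continuous.prodMk_right x)).measurable).ennreal_ofReal
  revert hg
  refine fun hg => Measurable.ennreal_induction
    (motive := fun g => ∫⁻ x, ∫⁻ y, ENNReal.ofReal (p (x, y)) * g y ∂μ ∂π = ∫⁻ y, g y ∂π)
    ?_ ?_ ?_ hg
  · intro c s hs
    -- inner integral
    have hinner : ∀ x : S, ∫⁻ y, ENNReal.ofReal (p (x, y)) * s.indicator (fun _ => c) y ∂μ
        = (∫⁻ y in s, ENNReal.ofReal (p (x, y)) ∂μ) * c := by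
      intro x
      have h1 : ∀ y, ENNReal.ofReal (p (x, y)) * s.indicator (fun _ => c) y
          = s.indicator (fun y => ENNReal.ofReal (p (x, y)) * c) y := by
        intro y; by_cases hy : y ∈ s <;> simp [hy]
      simp_rw [h1]
      rw [lintegral_indicator hs, lintegral_mul_const _ (hqx_meas x)]
    simp_rw [hinner]
    rw [lintegral_indicator_const hs]
    -- F x = ofReal (f x)
    set f : S → ℝ := fun x => ∫ y in s, p (x, y) ∂μ with hfdef
    have hpx_int : ∀ x : S, IntegrableOn (fun y => p (x, y)) s μ := by
      intro x
      have hm : Measurable fun y => p (x, y) := (hp_cont.comp (Continuous.prodMk_right x)).measurable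
      exact (aux_integrable μ hm C
        (fun y => by rw [abs_of_nonneg (hp_nonneg (x, y))]; exact hz₀ (x, y))).integrableOn
    have hF : ∀ x : S, (∫⁻ y in s, ENNReal.ofReal (p (x, y)) ∂μ) = ENNReal.ofReal (f x) := by
      intro x
      rw [← ofReal_integral_eq_lintegral_ofReal (hpx_int x)
        (Filter.Eventually.of_forall fun y => hp_nonneg _)]
    simp_rw [hF]
    have hf_meas : Measurable f := by
      have h : StronglyMeasurable fun z : S × S => p z :=
        hp_cont.measurable.stronglyMeasurable
      exact (MeasureTheory.StronglyMeasurable.integral_prod_right'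
        (ν := μ.restrict s) h).measurable
    have hf_nonneg : ∀ x, 0 ≤ f x := fun x =>
      integral_nonneg (fun y => hp_nonneg _)
    have hf_le : ∀ x, |f x| ≤ 1 := fun x => by
      rw [abs_of_nonneg (hf_nonneg x), ← hp_int x]
      have hm : Measurable fun y => p (x, y) := (hp_cont.comp (Continuous.prodMk_right x)).measurable
      exact setIntegral_le_integral
        (aux_integrable μ hm C
          (fun y => by rw [abs_of_nonneg (hp_nonneg (x, y))]; exact hz₀ (x, y)))
        (Filter.Eventually.of_forall fun y => hp_nonneg _)
    have hf_int : Integrable f π := aux_integrable π hf_meas 1 hf_le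
    rw [lintegral_mul_const _ hf_meas.ennreal_ofReal,
      ofReal_integral_eq_lintegral_ofReal hf_int
        (Filter.Eventually.of_forall hf_nonneg) |>.symm,
      ← hπ_inv s hs, ENNReal.ofReal_toReal (measure_ne_top π s), mul_comm]
  · intro f g hdisj hf hg ihf ihg
    have hAf : Measurable fun x => ∫⁻ y, ENNReal.ofReal (p (x, y)) * f y ∂μ :=
      Measurable.lintegral_prod_right' (hq_meas.mul (hf.comp measurable_snd))
    have hAg : Measurable fun x => ∫⁻ y, ENNReal.ofReal (p (x, y)) * g y ∂μ :=
      Measurable.lintegral_prod_right' (hq_meas.mul (hg.comp measurable_snd))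
    have hinner : ∀ x : S, ∫⁻ y, ENNReal.ofReal (p (x, y)) * (f + g) y ∂μ
        = (∫⁻ y, ENNReal.ofReal (p (x, y)) * f y ∂μ)
          + ∫⁻ y, ENNReal.ofReal (p (x, y)) * g y ∂μ := by
      intro x
      simp_rw [Pi.add_apply, mul_add]
      exact lintegral_add_left ((hqx_meas x).mul hf) _
    simp_rw [hinner]
    rw [lintegral_add_left hAf, ihf, ihg]
    simp_rw [Pi.add_apply]
    rw [lintegral_add_left hf]
  · intro f hf hmono ih
    have hinner : ∀ x : S, ∫⁻ y, ENNReal.ofReal (p (x, y)) * (⨆ n, f n y) ∂μ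
        = ⨆ n, ∫⁻ y, ENNReal.ofReal (p (x, y)) * f n y ∂μ := by
      intro x
      simp_rw [ENNReal.mul_iSup]
      exact lintegral_iSup (fun n => (hqx_meas x).mul (hf n))
        (fun i j hij y => mul_le_mul_right (hmono hij y) _)
    simp_rw [hinner]
    have hA : ∀ n : ℕ, Measurable fun x => ∫⁻ y, ENNReal.ofReal (p (x, y)) * f n y ∂μ :=
      fun n => Measurable.lintegral_prod_right' (hq_meas.mul ((hf n).comp measurable_snd))
    rw [lintegral_iSup hA
      (fun i j hij x => lintegral_mono fun y => mul_le_mul_right (hmono hij y) _)]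
    rw [lintegral_iSup hf (fun i j hij y => hmono hij y)]
    exact iSup_congr ih
end aux3

section aux4
variable {S : Type*} [MetricSpace S] [CompactSpace S] [Nonempty S]
    [MeasurableSpace S] [BorelSpace S]
    (μ : Measure S) [IsProbabilityMeasure μ]
    (p : S × S → ℝ)

lemma mean_preserved_nonneg (hp_cont : Continuous p) (hp_nonneg : ∀ z, 0 ≤ p z)
    (hp_int : ∀ x : S, ∫ y, p (x, y) ∂μ = 1)
    (π : Measure S) (hπ_prob : IsProbabilityMeasure π)
    (hπ_inv : ∀ E : Set S, MeasurableSet E →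
      (π E).toReal = ∫ x, (∫ y in E, p (x, y) ∂μ) ∂π)
    {ψ : S → ℝ} (hψ : Measurable ψ) (hψ0 : ∀ y, 0 ≤ ψ y) {M : ℝ} (hM : ∀ y, |ψ y| ≤ M) :
    ∫ x, (∫ y, p (x, y) * ψ y ∂μ) ∂π = ∫ y, ψ y ∂π := by
  haveI := hπ_prob
  obtain ⟨z₀, -, hz₀'⟩ := isCompact_univ.exists_isMaxOn
    ⟨(Classical.arbitrary S, Classical.arbitrary S), trivial⟩ hp_cont.continuousOn
  have hz₀ : ∀ z, p z ≤ p z₀ := fun z => hz₀' trivial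
  set C := p z₀ with hCdef
  set g : S → ENNReal := fun y => ENNReal.ofReal (ψ y) with hgdef
  have hg : Measurable g := hψ.ennreal_ofReal
  set Pψ : S → ℝ := fun x => ∫ y, p (x, y) * ψ y ∂μ with hPψdef
  have hψ_int : Integrable ψ μ := aux_integrable μ hψ M hM
  have hψπ_int : Integrable ψ π := aux_integrable π hψ M hM
  have hpψ_int : ∀ x : S, Integrable (fun y => p (x, y) * ψ y) μ := by
    intro x
    have hm : Measurable fun y => p (x, y) := (hp_cont.comp (Continuous.prodMk_right x)).measurable
    exact aux_integrable μ (hm.mul hψ) (C * M) (fun y => by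
      rw [abs_mul, abs_of_nonneg (hp_nonneg (x, y))]
      exact mul_le_mul (hz₀ (x, y)) (hM y) (abs_nonneg _)
        (le_trans (hp_nonneg (x, y)) (hz₀ (x, y))))
  have hinner : ∀ x : S, ENNReal.ofReal (Pψ x)
      = ∫⁻ y, ENNReal.ofReal (p (x, y)) * g y ∂μ := by
    intro x
    rw [ofReal_integral_eq_lintegral_ofReal (hpψ_int x)
      (Filter.Eventually.of_forall fun y => mul_nonneg (hp_nonneg _) (hψ0 y))]
    congr 1
    funext y
    rw [ENNReal.ofReal_mul (hp_nonneg (x, y))]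
  have hPψ_meas : Measurable Pψ := meas_P μ p hp_cont hψ
  have hPψ_nonneg : ∀ x, 0 ≤ Pψ x := fun x =>
    integral_nonneg fun y => mul_nonneg (hp_nonneg _) (hψ0 y)
  have hPψ_bdd : ∀ x, |Pψ x| ≤ M := fun x => bound_P μ p hp_cont hp_nonneg hp_int hψ hM x
  have hPψ_int : Integrable Pψ π := aux_integrable π hPψ_meas M hPψ_bdd
  have key : ENNReal.ofReal (∫ x, Pψ x ∂π) = ENNReal.ofReal (∫ y, ψ y ∂π) := by
    rw [ofReal_integral_eq_lintegral_ofReal hPψ_int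
      (Filter.Eventually.of_forall hPψ_nonneg)]
    rw [ofReal_integral_eq_lintegral_ofReal hψπ_int (Filter.Eventually.of_forall hψ0)]
    simp_rw [hinner]
    exact inv_lintegral μ p hp_cont hp_nonneg hp_int π hπ_prob hπ_inv hg
  exact (ENNReal.ofReal_eq_ofReal_iff (integral_nonneg hPψ_nonneg)
    (integral_nonneg hψ0)).1 key

lemma mean_preserved (hp_cont : Continuous p) (hp_nonneg : ∀ z, 0 ≤ p z)
    (hp_int : ∀ x : S, ∫ y, p (x, y) ∂μ = 1)
    (π : Measure S) (hπ_prob : IsProbabilityMeasure π)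
    (hπ_inv : ∀ E : Set S, MeasurableSet E →
      (π E).toReal = ∫ x, (∫ y in E, p (x, y) ∂μ) ∂π)
    {ψ : S → ℝ} (hψ : Measurable ψ) {M : ℝ} (hM : ∀ y, |ψ y| ≤ M) :
    ∫ x, (∫ y, p (x, y) * ψ y ∂μ) ∂π = ∫ y, ψ y ∂π := by
  haveI := hπ_prob
  set ψ' : S → ℝ := fun y => ψ y + M with hψ'def
  have hψ' : Measurable ψ' := hψ.add measurable_const
  have hψ'0 : ∀ y, 0 ≤ ψ' y := fun y => by
    have := (abs_le.1 (hM y)).1; simp only [hψ'def]; linarith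
  have hψ'M : ∀ y, |ψ' y| ≤ 2 * M := fun y => by
    have h := abs_le.1 (hM y)
    have hM0 : 0 ≤ M := le_trans (abs_nonneg (ψ y)) (hM y)
    rw [abs_le]; simp only [hψ'def]
    constructor <;> linarith
  have h0 := mean_preserved_nonneg μ p hp_cont hp_nonneg hp_int π hπ_prob hπ_inv hψ' hψ'0 hψ'M
  have hψ_int : Integrable ψ π := aux_integrable π hψ M hM
  have hinner : ∀ x : S, ∫ y, p (x, y) * ψ' y ∂μ = (∫ y, p (x, y) * ψ y ∂μ) + M := by
    intro x
    obtain ⟨z₀, -, hz₀'⟩ := isCompact_univ.exists_isMaxOn ⟨(x, x), trivial⟩ hp_cont.continuousOn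
    have hz₀ : ∀ z, p z ≤ p z₀ := fun z => hz₀' trivial
    have hm : Measurable fun y => p (x, y) := (hp_cont.comp (Continuous.prodMk_right x)).measurable
    have h1 : Integrable (fun y => p (x, y) * ψ y) μ :=
      aux_integrable μ (hm.mul hψ) (p z₀ * M) (fun y => by
        rw [abs_mul, abs_of_nonneg (hp_nonneg (x, y))]
        exact mul_le_mul (hz₀ (x, y)) (hM y) (abs_nonneg _)
          (le_trans (hp_nonneg (x, y)) (hz₀ (x, y))))
    have h2 : Integrable (fun y => p (x, y) * M) μ :=
      aux_integrable μ (hm.mul measurable_const) (p z₀ * M) (fun y => by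
        rw [abs_mul, abs_of_nonneg (hp_nonneg (x, y)),
          abs_of_nonneg (le_trans (abs_nonneg (ψ y)) (hM y))]
        exact mul_le_mul_of_nonneg_right (hz₀ (x, y)) (le_trans (abs_nonneg (ψ y)) (hM y)))
    have : (fun y => p (x, y) * ψ' y) = fun y => p (x, y) * ψ y + p (x, y) * M := by
      funext y; simp only [hψ'def]; ring
    rw [this, integral_add h1 h2, integral_mul_const, hp_int, one_mul]
  simp_rw [hinner] at h0
  have hPψ_meas : Measurable fun x => ∫ y, p (x, y) * ψ y ∂μ := meas_P μ p hp_cont hψ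
  have hPψ_int : Integrable (fun x => ∫ y, p (x, y) * ψ y ∂μ) π :=
    aux_integrable π hPψ_meas M (bound_P μ p hp_cont hp_nonneg hp_int hψ hM)
  rw [integral_add hPψ_int (integrable_const M), integral_const] at h0
  rw [integral_add hψ_int (integrable_const M), integral_const] at h0
  simp only [measure_univ, ENNReal.toReal_one, smul_eq_mul, one_mul] at h0
  linarith
end aux4

/-- if `φ` is bounded measurable with zero mean against the (unique)
invariant probability measure `π` of the Markov operator `P`, then `Σₙ (Pⁿφ)(x)` converges
absolutely for every `x`, uniformly in `x`. -/
theorem stmt_2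
    {S : Type*} [MetricSpace S] [CompactSpace S] [Nonempty S]
    [MeasurableSpace S] [BorelSpace S]
    (μ : Measure S) [IsProbabilityMeasure μ]
    (p : S × S → ℝ) (hp_cont : Continuous p) (hp_nonneg : ∀ z, 0 ≤ p z)
    (hp_int : ∀ x : S, ∫ y, p (x, y) ∂μ = 1)
    (P : (S → ℝ) → (S → ℝ))
    (hP : ∀ (φ : S → ℝ) (x : S), P φ x = ∫ y, p (x, y) * φ y ∂μ)
    (U₀ : Set S) (hU₀ : MeasurableSet U₀)
    (δ : ℝ) (hδ : 0 < δ)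
    (hδμ_pos : 0 < δ * (μ U₀).toReal) (hδμ_lt : δ * (μ U₀).toReal < 1)
    (hp_low : ∀ x : S, ∀ y ∈ U₀, δ ≤ p (x, y))
    (π : Measure S) (hπ_prob : IsProbabilityMeasure π)
    (hπ_inv : ∀ E : Set S, MeasurableSet E →
      (π E).toReal = ∫ x, (∫ y in E, p (x, y) ∂μ) ∂π)
    (φ : S → ℝ) (hφ_meas : Measurable φ) (hφ_bdd : ∃ M : ℝ, ∀ x, |φ x| ≤ M)
    (hφ_mean : ∫ y, φ y ∂π = 0) :
    (∀ x : S, Summable (fun n : ℕ => |(P^[n] φ) x|)) ∧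
    ∃ B : ℝ, ∀ x : S, ∑' n : ℕ, |(P^[n] φ) x| ≤ B := by
  haveI := hπ_prob
  obtain ⟨M₀', hM₀'⟩ := hφ_bdd
  set M₀ := max M₀' 0 with hM₀def
  have hM₀ : ∀ x, |φ x| ≤ M₀ := fun x => le_trans (hM₀' x) (le_max_left _ _)
  set θ := 1 - δ * (μ U₀).toReal with hθdef
  have hθ0 : 0 ≤ θ := by simp only [hθdef]; linarith
  have hθ1 : θ < 1 := by simp only [hθdef]; linarith
  set f : ℕ → S → ℝ := fun n => P^[n] φ with hfdef
  have hsucc : ∀ (n : ℕ) (x : S), f (n + 1) x = ∫ y, p (x, y) * f n y ∂μ := fun n x => by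
    simp only [hfdef, Function.iterate_succ_apply']
    exact hP _ x
  have good : ∀ n, Measurable (f n) ∧ (∀ x, |f n x| ≤ M₀) ∧ ∫ x, f n x ∂π = 0 := by
    intro n; induction n with
    | zero => exact ⟨hφ_meas, hM₀, hφ_mean⟩
    | succ n ih =>
      obtain ⟨hmeas, hbdd, hmean⟩ := ih
      have heq : f (n + 1) = fun x => ∫ y, p (x, y) * f n y ∂μ := funext (hsucc n)
      refine ⟨?_, ?_, ?_⟩
      · rw [heq]; exact meas_P μ p hp_cont hmeas
      · intro x; rw [heq]; exact bound_P μ p hp_cont hp_nonneg hp_int hmeas hbdd x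
      · rw [heq,
          mean_preserved μ p hp_cont hp_nonneg hp_int π hπ_prob hπ_inv hmeas hbdd, hmean]
  have hint : ∀ n, Integrable (f n) π := fun n =>
    aux_integrable π (good n).1 M₀ (good n).2.1
  have hbddA : ∀ n, BddAbove (Set.range (f n)) := fun n =>
    ⟨M₀, Set.forall_mem_range.2 fun x => (abs_le.1 ((good n).2.1 x)).2⟩
  have hbddB : ∀ n, BddBelow (Set.range (f n)) := fun n =>
    ⟨-M₀, Set.forall_mem_range.2 fun x => (abs_le.1 ((good n).2.1 x)).1⟩
  set Mn : ℕ → ℝ := fun n => ⨆ x, f n x with hMndef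
  set mn : ℕ → ℝ := fun n => ⨅ x, f n x with hmndef
  have hle : ∀ n x, f n x ≤ Mn n := fun n x => le_ciSup (hbddA n) x
  have hge : ∀ n x, mn n ≤ f n x := fun n x => ciInf_le (hbddB n) x
  set d : ℕ → ℝ := fun n => Mn n - mn n with hddef
  have hm_le0 : ∀ n, mn n ≤ 0 := fun n => by
    have h1 : ∫ x, (mn n : ℝ) ∂π ≤ ∫ x, f n x ∂π :=
      integral_mono (integrable_const _) (hint n) (hge n)
    rw [(good n).2.2, integral_const] at h1
    simpa using h1
  have hM_ge0 : ∀ n, 0 ≤ Mn n := fun n => by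
    have h1 : ∫ x, f n x ∂π ≤ ∫ x, (Mn n : ℝ) ∂π :=
      integral_mono (hint n) (integrable_const _) (hle n)
    rw [(good n).2.2, integral_const] at h1
    simpa using h1
  have habs : ∀ n x, |f n x| ≤ d n := fun n x => abs_le.2
    ⟨by have := hge n x; have := hM_ge0 n; simp only [hddef]; linarith,
     by have := hle n x; have := hm_le0 n; simp only [hddef]; linarith⟩
  have hcontr : ∀ n, d (n + 1) ≤ θ * d n := by
    intro n
    have key : ∀ x₁ x₂, f (n + 1) x₁ - f (n + 1) x₂ ≤ θ * d n := by
      intro x₁ x₂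
      rw [hsucc n x₁, hsucc n x₂]
      have h := contraction_P μ p hp_cont hp_nonneg hp_int U₀ hU₀ δ hδ hp_low
        (good n).1 (hge n) (hle n) x₁ x₂
      calc (∫ y, p (x₁, y) * f n y ∂μ) - ∫ y, p (x₂, y) * f n y ∂μ
          ≤ (1 - δ * (μ U₀).toReal) * (Mn n - mn n) := h
        _ = θ * d n := by rw [hθdef, hddef]
    have h1 : ∀ x₁, f (n + 1) x₁ ≤ mn (n + 1) + θ * d n := by
      intro x₁
      have h2 : f (n + 1) x₁ - θ * d n ≤ mn (n + 1) :=
        le_ciInf fun x₂ => by linarith [key x₁ x₂]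
      linarith
    have h2 : Mn (n + 1) ≤ mn (n + 1) + θ * d n := ciSup_le h1
    simp only [hddef] at h2 ⊢; linarith
  have hdn : ∀ n, d n ≤ d 0 * θ ^ n := by
    intro n; induction n with
    | zero => simp
    | succ n ih =>
      calc d (n + 1) ≤ θ * d n := hcontr n
        _ ≤ θ * (d 0 * θ ^ n) := mul_le_mul_of_nonneg_left ih hθ0
        _ = d 0 * θ ^ (n + 1) := by ring
  have hbound : ∀ n x, |f n x| ≤ d 0 * θ ^ n := fun n x => le_trans (habs n x) (hdn n)
  have hsum_geo : Summable (fun n : ℕ => d 0 * θ ^ n) :=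
    (summable_geometric_of_lt_one hθ0 hθ1).mul_left _
  have hsum : ∀ x, Summable (fun n : ℕ => |f n x|) := fun x =>
    Summable.of_nonneg_of_le (fun n => abs_nonneg _) (fun n => hbound n x) hsum_geo
  refine ⟨hsum, ⟨d 0 * (1 - θ)⁻¹, fun x => ?_⟩⟩
  calc ∑' n : ℕ, |f n x| ≤ ∑' n : ℕ, d 0 * θ ^ n :=
        Summable.tsum_le_tsum (fun n => hbound n x) (hsum x) hsum_geo
    _ = d 0 * (1 - θ)⁻¹ := by rw [tsum_mul_left, tsum_geometric_of_lt_one hθ0 hθ1]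
end

section
/- The map Φ : ℝ^d → ℝ^d defined by the successive updates x₁* = x₁ + Δt·v₁(x₂,…,x_d), and for i = 2,…,d, x_i* = x_i + Δt·v_i(x₁*,…,x_{i−1}*, x_{i+1},…,x_d), with Φ(x) = (x₁*,…,x_d*), is a bijection of ℝ^d that preserves d-dimensional Lebesgue measure: for every Borel set A ⊆ ℝ^d, λ(Φ⁻¹(A)) = λ(A); i.e., the deterministic part of the volume-preserving splitting scheme is volume-preserving. -/
open MeasureTheory

/-- One update step of the deterministic part of the volume-preserving splitting scheme:
coordinate `i` is replaced by `x i + Δt · v i x`. -/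
noncomputable def schemeStep {d : ℕ} (Δt : ℝ) (v : Fin d → (Fin d → ℝ) → ℝ)
    (i : Fin d) (x : Fin d → ℝ) : Fin d → ℝ :=
  Function.update x i (x i + Δt * v i x)

/-- The deterministic part of the volume-preserving splitting scheme: the coordinates are
updated successively, `x₁* = x₁ + Δt·v₁(x₂,…,x_d)` and, for `i = 2,…,d`,
`x_i* = x_i + Δt·v_i(x₁*,…,x_{i−1}*, x_{i+1},…,x_d)`. -/
noncomputable def schemeMap {d : ℕ} (Δt : ℝ) (v : Fin d → (Fin d → ℝ) → ℝ) :
    (Fin d → ℝ) → (Fin d → ℝ) :=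
  (List.finRange d).foldl (fun F i => schemeStep Δt v i ∘ F) id

section Aux
variable {d : ℕ} (Δt : ℝ) (v : Fin d → (Fin d → ℝ) → ℝ)

lemma schemeStep_cancel (i : Fin d)
    (hi : ∀ x y : Fin d → ℝ, (∀ j : Fin d, j ≠ i → x j = y j) → v i x = v i y)
    (x : Fin d → ℝ) :
    schemeStep (-Δt) v i (schemeStep Δt v i x) = x := by
  set y := schemeStep Δt v i x with hy
  have hvy : v i y = v i x := hi y x (fun j hj => by
    simp [hy, schemeStep, Function.update_of_ne hj])
  have hyi : y i = x i + Δt * v i x := by simp [hy, schemeStep]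
  funext j
  by_cases hj : j = i
  · subst hj
    simp [schemeStep, hvy, hyi]
  · simp [schemeStep, Function.update_of_ne hj, hy]

lemma schemeStep_bijective (i : Fin d)
    (hi : ∀ x y : Fin d → ℝ, (∀ j : Fin d, j ≠ i → x j = y j) → v i x = v i y) :
    Function.Bijective (schemeStep Δt v i) := by
  refine Function.bijective_iff_has_inverse.2 ⟨schemeStep (-Δt) v i, ?_, ?_⟩
  · exact schemeStep_cancel Δt v i hi
  · intro x
    have := schemeStep_cancel (-Δt) v i hi x
    rwa [neg_neg] at this

lemma schemeStep_measurePreserving (i : Fin d)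
    (hc : Continuous (v i))
    (hi : ∀ x y : Fin d → ℝ, (∀ j : Fin d, j ≠ i → x j = y j) → v i x = v i y) :
    MeasurePreserving (schemeStep Δt v i) volume volume := by
  classical
  set p : Fin d → Prop := fun j => j ≠ i with hp
  set e := MeasurableEquiv.piEquivPiSubtypeProd (fun _ : Fin d => ℝ) p with he
  -- V computes v i from the non-i coordinates
  set ext : ({j // p j} → ℝ) → (Fin d → ℝ) :=
    fun y j => if h : p j then y ⟨j, h⟩ else 0 with hext
  have hext_cont : Continuous ext := by
    apply continuous_pi
    intro j
    by_cases h : p j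
    · have : Continuous fun y : {j // p j} → ℝ => y ⟨j, h⟩ := continuous_apply _
      simpa only [hext, dif_pos h] using this
    · simpa [hext, h] using continuous_const
  set V : ({j // p j} → ℝ) → ℝ := fun y => v i (ext y) with hV
  have hVc : Continuous V := hc.comp hext_cont
  set S : (({j // p j} → ℝ) × ({j // ¬ p j} → ℝ)) → (({j // p j} → ℝ) × ({j // ¬ p j} → ℝ)) :=
    fun q => (q.1, q.2 + fun _ => Δt * V q.1) with hS
  have hSmp : MeasurePreserving S volume volume := by
    have hm : Measurable (Function.uncurry fun (a : {j // p j} → ℝ) (t : {j // ¬ p j} → ℝ) =>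
        t + fun _ : {j // ¬ p j} => Δt * V a) := by
      apply Measurable.add measurable_snd
      exact measurable_pi_lambda _ (fun _ => ((hVc.comp continuous_fst).const_smul Δt).measurable)
    have hae : ∀ᵐ a ∂(volume : Measure ({j // p j} → ℝ)),
        Measure.map (fun t : {j // ¬ p j} → ℝ => t + fun _ => Δt * V a) volume = volume :=
      Filter.Eventually.of_forall fun a =>
        (measurePreserving_add_right (volume) (fun _ => Δt * V a)).map_eq
    exact (MeasurePreserving.id (volume : Measure ({j // p j} → ℝ))).skew_product hm hae
  have hemp : MeasurePreserving e volume volume :=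
    volume_preserving_piEquivPiSubtypeProd (fun _ : Fin d => ℝ) p
  have hesmp : MeasurePreserving e.symm volume volume :=
    hemp.symm e
  have key : schemeStep Δt v i = e.symm ∘ S ∘ e := by
    funext x
    have hVx : V (fun j : {j // p j} => x j) = v i x := by
      apply hi
      intro j hj
      simp [hV, hext, hp, hj]
    funext j
    simp only [Function.comp_apply, he, MeasurableEquiv.piEquivPiSubtypeProd,
      Equiv.piEquivPiSubtypeProd, MeasurableEquiv.coe_mk, Equiv.coe_fn_mk,
      Equiv.coe_fn_symm_mk, hS]
    by_cases h : p j
    · simp [schemeStep, Function.update_of_ne h, if_pos h]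
    · have hj : j = i := not_not.mp h
      subst hj
      simp [schemeStep, h, hVx, Pi.add_apply]
  rw [key]
  exact (hesmp.comp hSmp).comp hemp

lemma foldl_bijective
    (hi : ∀ (i : Fin d) (x y : Fin d → ℝ), (∀ j : Fin d, j ≠ i → x j = y j) → v i x = v i y)
    (l : List (Fin d)) (F : (Fin d → ℝ) → (Fin d → ℝ)) (hF : Function.Bijective F) :
    Function.Bijective (l.foldl (fun F i => schemeStep Δt v i ∘ F) F) := by
  induction l generalizing F with
  | nil => exact hF
  | cons i l ih =>
      exact ih _ ((schemeStep_bijective Δt v i (hi i)).comp hF)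

lemma foldl_measurePreserving
    (hc : ∀ i, Continuous (v i))
    (hi : ∀ (i : Fin d) (x y : Fin d → ℝ), (∀ j : Fin d, j ≠ i → x j = y j) → v i x = v i y)
    (l : List (Fin d)) (F : (Fin d → ℝ) → (Fin d → ℝ))
    (hF : MeasurePreserving F volume volume) :
    MeasurePreserving (l.foldl (fun F i => schemeStep Δt v i ∘ F) F) volume volume := by
  induction l generalizing F with
  | nil => exact hF
  | cons i l ih =>
      exact ih _ ((schemeStep_measurePreserving Δt v i (hc i) (hi i)).comp hF)

end Aux

/-- if each component `v i` of the velocity field does not depend on the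
`i`-th coordinate, then the deterministic part of the volume-preserving splitting scheme is
a bijection of `ℝ^d` preserving `d`-dimensional Lebesgue measure. -/
theorem stmt_7
    (d : ℕ) (hd : 2 ≤ d) (Δt : ℝ) (hΔt : 0 < Δt)
    (v : Fin d → (Fin d → ℝ) → ℝ)
    (hv_cont : ∀ i, Continuous (v i))
    (hv_indep : ∀ (i : Fin d) (x y : Fin d → ℝ),
      (∀ j : Fin d, j ≠ i → x j = y j) → v i x = v i y) :
    Function.Bijective (schemeMap Δt v) ∧
    ∀ A : Set (Fin d → ℝ), MeasurableSet A →
      volume (schemeMap Δt v ⁻¹' A) = volume A := by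
  have hmp : MeasurePreserving (schemeMap Δt v) volume volume :=
    foldl_measurePreserving Δt v hv_cont hv_indep _ id (MeasurePreserving.id _)
  refine ⟨foldl_bijective Δt v hv_indep _ id Function.bijective_id, fun A hA => ?_⟩
  exact hmp.measure_preimage hA.nullMeasurableSet
end

section
/- Assume (i) there exist C ≥ 0 and ρ > 0 such that sup_{(τ,x)} |(Iⁿ g)(τ,x)| ≤ C e^{−ρn} for all integers n ≥ 0, where g(τ,x) := v₁(τ + q(Δt/2), x₂); and (ii) for every bounded measurable φ : 𝕋 × 𝕋² → ℝ with ∫_{𝕋²} φ(τ,x) dx = 0 for every τ, one has sup_{(τ,x)} |(Iⁿφ)(τ,x)| → 0 as n → ∞. Then the series v̂ := Δt Σ_{n=0}^∞ Iⁿ g converges uniformly to a bounded measurable function on 𝕋 × 𝕋² satisfying the discrete cell problem v̂(τ,x) = (I v̂)(τ,x) + Δt·v₁(τ + q(Δt/2), x₂) for all (τ,x), with ∫_{𝕋²} v̂(τ,x) dx = 0 for every τ; moreover v̂ is the unique bounded measurable function with zero spatial mean for every τ that satisfies this equation. -/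
open MeasureTheory ProbabilityTheory Filter

/-- existence, uniqueness and uniform convergence for the discrete-type
cell problem `v̂ = I v̂ + Δt·v₁(τ + Δt/2, x₂)` associated with the one-step flow operator
`I` of the stochastic structure-preserving scheme on the space-time torus `𝕋 × 𝕋²`,
assuming the exponential decay of `Iⁿ g` (where `g(τ,x) = v₁(τ + Δt/2, x₂)`) and the
uniform mixing of `Iⁿ` on bounded measurable functions with zero spatial mean. -/
theorem stmt_9
    (N : ℕ) (hN : 0 < N) (Δt : ℝ) (hΔt : Δt = 1 / (N : ℝ)) (σ : ℝ) (hσ : 0 < σ)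
    (v₁ v₂ : UnitAddCircle × UnitAddCircle → ℝ)
    (hv₁_cont : Continuous v₁) (hv₂_cont : Continuous v₂)
    (hv₁_mean : ∀ τ : UnitAddCircle, ∫ x₂ : UnitAddCircle, v₁ (τ, x₂) = 0)
    (Φ : UnitAddCircle → UnitAddCircle × UnitAddCircle → UnitAddCircle × UnitAddCircle)
    (hΦ : ∀ (τ : UnitAddCircle) (x : UnitAddCircle × UnitAddCircle), Φ τ x =
      (x.1 + (↑(Δt * v₁ (τ + (↑(Δt / 2) : UnitAddCircle), x.2)) : UnitAddCircle),
       x.2 + (↑(Δt * v₂ (τ + (↑(Δt / 2) : UnitAddCircle),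
         x.1 + (↑(Δt * v₁ (τ + (↑(Δt / 2) : UnitAddCircle), x.2)) : UnitAddCircle)))
           : UnitAddCircle)))
    (I : (UnitAddCircle × (UnitAddCircle × UnitAddCircle) → ℝ) →
         (UnitAddCircle × (UnitAddCircle × UnitAddCircle) → ℝ))
    (hI : ∀ (φ : UnitAddCircle × (UnitAddCircle × UnitAddCircle) → ℝ)
        (τ : UnitAddCircle) (x : UnitAddCircle × UnitAddCircle),
      I φ (τ, x) = ∫ ξ : ℝ × ℝ,
        φ (τ + (↑Δt : UnitAddCircle),
          ((Φ τ x).1 + (↑(σ * Real.sqrt Δt * ξ.1) : UnitAddCircle),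
           (Φ τ x).2 + (↑(σ * Real.sqrt Δt * ξ.2) : UnitAddCircle)))
        ∂((gaussianReal 0 1).prod (gaussianReal 0 1)))
    (g : UnitAddCircle × (UnitAddCircle × UnitAddCircle) → ℝ)
    (hg : ∀ (τ : UnitAddCircle) (x : UnitAddCircle × UnitAddCircle),
      g (τ, x) = v₁ (τ + (↑(Δt / 2) : UnitAddCircle), x.2))
    (C ρ : ℝ) (hC : 0 ≤ C) (hρ : 0 < ρ)
    (hdecay : ∀ (n : ℕ) (z : UnitAddCircle × (UnitAddCircle × UnitAddCircle)),
      |(I^[n] g) z| ≤ C * Real.exp (-ρ * n))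
    (hmix : ∀ φ : UnitAddCircle × (UnitAddCircle × UnitAddCircle) → ℝ,
      Measurable φ → (∃ M : ℝ, ∀ z, |φ z| ≤ M) →
      (∀ τ : UnitAddCircle, ∫ x : UnitAddCircle × UnitAddCircle, φ (τ, x) = 0) →
      Tendsto (fun n : ℕ => ⨆ z, |(I^[n] φ) z|) atTop (nhds 0)) :
    ∃ vhat : UnitAddCircle × (UnitAddCircle × UnitAddCircle) → ℝ,
      (∀ z, vhat z = Δt * ∑' n : ℕ, (I^[n] g) z) ∧
      TendstoUniformly
        (fun (n : ℕ) (z : UnitAddCircle × (UnitAddCircle × UnitAddCircle)) =>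
          Δt * ∑ i ∈ Finset.range n, (I^[i] g) z) vhat atTop ∧
      Measurable vhat ∧ (∃ M : ℝ, ∀ z, |vhat z| ≤ M) ∧
      (∀ z, vhat z = I vhat z + Δt * g z) ∧
      (∀ τ : UnitAddCircle, ∫ x : UnitAddCircle × UnitAddCircle, vhat (τ, x) = 0) ∧
      (∀ w : UnitAddCircle × (UnitAddCircle × UnitAddCircle) → ℝ,
        Measurable w → (∃ M : ℝ, ∀ z, |w z| ≤ M) →
        (∀ τ : UnitAddCircle, ∫ x : UnitAddCircle × UnitAddCircle, w (τ, x) = 0) →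
        (∀ z, w z = I w z + Δt * g z) → w = vhat) := by
  classical
  haveI hprob : IsProbabilityMeasure (volume : Measure UnitAddCircle) :=
    ⟨UnitAddCircle.measure_univ⟩
  haveI hprob2 : IsProbabilityMeasure (volume : Measure (UnitAddCircle × UnitAddCircle)) := by
    infer_instance
  haveI hinv2 : (volume : Measure (UnitAddCircle × UnitAddCircle)).IsAddRightInvariant :=
    Measure.prod.instIsAddRightInvariant
  set γ : Measure (ℝ × ℝ) := (gaussianReal 0 1).prod (gaussianReal 0 1) with hγ_def
  haveI hγp : IsProbabilityMeasure γ := by rw [hγ_def]; infer_instance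
  have hcoe : Continuous (fun r : ℝ => (r : UnitAddCircle)) := AddCircle.continuous_mk' 1
  -- the one-step kernel
  set K : (UnitAddCircle × (UnitAddCircle × UnitAddCircle)) → ℝ × ℝ →
      (UnitAddCircle × (UnitAddCircle × UnitAddCircle)) :=
    fun z ξ => (z.1 + (↑Δt : UnitAddCircle),
      ((Φ z.1 z.2).1 + (↑(σ * Real.sqrt Δt * ξ.1) : UnitAddCircle),
       (Φ z.1 z.2).2 + (↑(σ * Real.sqrt Δt * ξ.2) : UnitAddCircle))) with hK_def
  have hI' : ∀ (φ : UnitAddCircle × (UnitAddCircle × UnitAddCircle) → ℝ)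
      (z : UnitAddCircle × (UnitAddCircle × UnitAddCircle)),
      I φ z = ∫ ξ, φ (K z ξ) ∂γ := fun φ z => hI φ z.1 z.2
  -- measurability of Φ and K
  have hΦm : Measurable (fun p : UnitAddCircle × (UnitAddCircle × UnitAddCircle) =>
      Φ p.1 p.2) := by
    have he : (fun p : UnitAddCircle × (UnitAddCircle × UnitAddCircle) => Φ p.1 p.2) =
        fun p =>
          (p.2.1 + (↑(Δt * v₁ (p.1 + (↑(Δt / 2) : UnitAddCircle), p.2.2)) : UnitAddCircle),
           p.2.2 + (↑(Δt * v₂ (p.1 + (↑(Δt / 2) : UnitAddCircle),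
             p.2.1 + (↑(Δt * v₁ (p.1 + (↑(Δt / 2) : UnitAddCircle), p.2.2)) : UnitAddCircle)))
               : UnitAddCircle)) := funext fun p => hΦ p.1 p.2
    rw [he]
    have c1 : Continuous (fun p : UnitAddCircle × (UnitAddCircle × UnitAddCircle) =>
        p.2.1 + (↑(Δt * v₁ (p.1 + (↑(Δt / 2) : UnitAddCircle), p.2.2)) : UnitAddCircle)) :=
      (continuous_snd.fst).add (hcoe.comp (continuous_const.mul (hv₁_cont.comp
        ((continuous_fst.add continuous_const).prodMk continuous_snd.snd))))
    have c2 : Continuous (fun p : UnitAddCircle × (UnitAddCircle × UnitAddCircle) =>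
        p.2.2 + (↑(Δt * v₂ (p.1 + (↑(Δt / 2) : UnitAddCircle),
          p.2.1 + (↑(Δt * v₁ (p.1 + (↑(Δt / 2) : UnitAddCircle), p.2.2)) : UnitAddCircle)))
            : UnitAddCircle)) :=
      (continuous_snd.snd).add (hcoe.comp (continuous_const.mul (hv₂_cont.comp
        ((continuous_fst.add continuous_const).prodMk c1))))
    exact (c1.prodMk c2).measurable
  have hKm : Measurable (fun p : (UnitAddCircle × (UnitAddCircle × UnitAddCircle)) × (ℝ × ℝ) =>
      K p.1 p.2) := by
    apply Measurable.prodMk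
    · exact (measurable_fst.fst.add measurable_const)
    apply Measurable.prodMk
    · exact ((hΦm.comp measurable_fst).fst).add
        (hcoe.measurable.comp (measurable_const.mul measurable_snd.fst))
    · exact ((hΦm.comp measurable_fst).snd).add
        (hcoe.measurable.comp (measurable_const.mul measurable_snd.snd))
  have hKzm : ∀ z, Measurable (K z) := fun z => hKm.comp measurable_prodMk_left
  -- I preserves measurability
  have hIm : ∀ φ, Measurable φ → Measurable (I φ) := by
    intro φ hφ
    have he : I φ = fun z => ∫ ξ, φ (K z ξ) ∂γ := funext fun z => hI' φ z
    rw [he]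
    exact (MeasureTheory.StronglyMeasurable.integral_prod_right'
      (f := fun p : (UnitAddCircle × (UnitAddCircle × UnitAddCircle)) × (ℝ × ℝ) =>
        φ (K p.1 p.2)) ((hφ.comp hKm).stronglyMeasurable)).measurable
  -- integrability of compositions with the kernel
  have hIntK : ∀ (φ : UnitAddCircle × (UnitAddCircle × UnitAddCircle) → ℝ) (M : ℝ),
      Measurable φ → (∀ z, |φ z| ≤ M) → ∀ z, Integrable (fun ξ => φ (K z ξ)) γ := by
    intro φ M hφ hb z
    refine (integrable_const M).mono' ((hφ.comp (hKzm z)).aestronglyMeasurable) ?_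
    exact Eventually.of_forall fun ξ => by simpa [Real.norm_eq_abs] using hb (K z ξ)
  -- measurability of iterates of g
  have hgm : Measurable g := by
    have he : g = fun z => v₁ (z.1 + (↑(Δt / 2) : UnitAddCircle), z.2.2) :=
      funext fun z => hg z.1 z.2
    rw [he]
    exact (hv₁_cont.comp ((continuous_fst.add continuous_const).prodMk
      continuous_snd.snd)).measurable
  have hgm_iter : ∀ n : ℕ, Measurable (I^[n] g) := by
    intro n
    induction n with
    | zero => simpa using hgm
    | succ n ih => rw [Function.iterate_succ_apply']; exact hIm _ ih
  -- summability
  have hexp : Summable (fun n : ℕ => C * Real.exp (-ρ * n)) := by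
    have he : (fun n : ℕ => C * Real.exp (-ρ * n)) =
        fun n : ℕ => C * Real.exp ((n : ℝ) * (-ρ)) := by
      funext n; rw [mul_comm (-ρ) (n:ℝ)]
    rw [he]
    exact (Real.summable_exp_nat_mul_iff.2 (neg_lt_zero.2 hρ)).mul_left C
  have hsz : ∀ z, Summable (fun n : ℕ => (I^[n] g) z) := fun z =>
    Summable.of_norm_bounded hexp (fun n => by
      simpa [Real.norm_eq_abs] using hdecay n z)
  -- measure preservation of Φ τ
  have hmpΦ : ∀ τ, MeasurePreserving (Φ τ)
      (volume : Measure (UnitAddCircle × UnitAddCircle)) volume := by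
    intro τ
    set f : UnitAddCircle → UnitAddCircle :=
      fun x₂ => (↑(Δt * v₁ (τ + (↑(Δt / 2) : UnitAddCircle), x₂)) : UnitAddCircle) with hf_def
    set h : UnitAddCircle → UnitAddCircle :=
      fun y₁ => (↑(Δt * v₂ (τ + (↑(Δt / 2) : UnitAddCircle), y₁)) : UnitAddCircle) with hh_def
    have hfm : Measurable f :=
      (hcoe.comp (continuous_const.mul (hv₁_cont.comp
        (continuous_const.prodMk continuous_id)))).measurable
    have hhm : Measurable h :=
      (hcoe.comp (continuous_const.mul (hv₂_cont.comp
        (continuous_const.prodMk continuous_id)))).measurable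
    have h1 : MeasurePreserving
        (fun p : UnitAddCircle × UnitAddCircle => (p.1 + f p.2, p.2)) volume volume := by
      have h1' : MeasurePreserving
          (fun p : UnitAddCircle × UnitAddCircle => (p.1, p.2 + f p.1)) volume volume :=
        (MeasurePreserving.id volume).skew_product
          (g := fun a c => c + f a) (measurable_snd.add (hfm.comp measurable_fst))
          (Filter.Eventually.of_forall fun a => map_add_right_eq_self volume (f a))
      exact ((MeasureTheory.Measure.measurePreserving_swap).comp h1').comp
        (MeasureTheory.Measure.measurePreserving_swap
          (μ := (volume : Measure UnitAddCircle)) (ν := volume))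
    have h2 : MeasurePreserving
        (fun p : UnitAddCircle × UnitAddCircle => (p.1, p.2 + h p.1)) volume volume :=
      (MeasurePreserving.id volume).skew_product
        (g := fun a c => c + h a) (measurable_snd.add (hhm.comp measurable_fst))
        (Filter.Eventually.of_forall fun a => map_add_right_eq_self volume (h a))
    have he : Φ τ = (fun p : UnitAddCircle × UnitAddCircle => (p.1, p.2 + h p.1)) ∘
        (fun p : UnitAddCircle × UnitAddCircle => (p.1 + f p.2, p.2)) := by
      funext x
      simp only [Function.comp]
      rw [hΦ τ x]
    rw [he]
    exact h2.comp h1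
  -- the mean-transfer identity
  have hmean_shift : ∀ (φ : UnitAddCircle × (UnitAddCircle × UnitAddCircle) → ℝ) (M : ℝ),
      Measurable φ → (∀ z, |φ z| ≤ M) → ∀ τ : UnitAddCircle,
      (∫ x : UnitAddCircle × UnitAddCircle, I φ (τ, x)) =
        ∫ x : UnitAddCircle × UnitAddCircle, φ (τ + (↑Δt : UnitAddCircle), x) := by
    intro φ M hφ hb τ
    have h1 : (∫ x : UnitAddCircle × UnitAddCircle, I φ (τ, x)) =
        ∫ x : UnitAddCircle × UnitAddCircle, ∫ ξ, φ (K (τ, x) ξ) ∂γ := by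
      refine integral_congr_ae (Eventually.of_forall fun x => ?_)
      exact hI' φ (τ, x)
    rw [h1]
    have hintu : Integrable (Function.uncurry fun (x : UnitAddCircle × UnitAddCircle)
        (ξ : ℝ × ℝ) => φ (K (τ, x) ξ)) ((volume : Measure (UnitAddCircle × UnitAddCircle)).prod γ) := by
      refine (integrable_const M).mono' ?_ ?_
      · exact (hφ.comp (hKm.comp ((measurable_const.prodMk measurable_fst).prodMk
          measurable_snd))).aestronglyMeasurable
      · exact Eventually.of_forall fun p => by simpa [Real.norm_eq_abs, Function.uncurry_def] using hb _
    rw [integral_integral_swap hintu]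
    have h2 : ∀ ξ : ℝ × ℝ, (∫ x : UnitAddCircle × UnitAddCircle, φ (K (τ, x) ξ)) =
        ∫ x : UnitAddCircle × UnitAddCircle, φ (τ + (↑Δt : UnitAddCircle), x) := by
      intro ξ
      set c : UnitAddCircle × UnitAddCircle :=
        ((↑(σ * Real.sqrt Δt * ξ.1) : UnitAddCircle),
         (↑(σ * Real.sqrt Δt * ξ.2) : UnitAddCircle)) with hc_def
      have hT : MeasurePreserving (fun x : UnitAddCircle × UnitAddCircle => Φ τ x + c)
          volume volume :=
        (measurePreserving_add_right volume c).comp (hmpΦ τ)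
      have hψ : AEStronglyMeasurable
          (fun y : UnitAddCircle × UnitAddCircle => φ (τ + (↑Δt : UnitAddCircle), y))
          (Measure.map (fun x : UnitAddCircle × UnitAddCircle => Φ τ x + c) volume) :=
        ((hφ.comp measurable_prodMk_left).stronglyMeasurable).aestronglyMeasurable
      have h3 := integral_map (φ := fun x : UnitAddCircle × UnitAddCircle => Φ τ x + c)
        (f := fun y : UnitAddCircle × UnitAddCircle => φ (τ + (↑Δt : UnitAddCircle), y))
        hT.aemeasurable hψ
      rw [hT.map_eq] at h3
      exact h3.symm
    calc (∫ ξ, (∫ x : UnitAddCircle × UnitAddCircle, φ (K (τ, x) ξ)) ∂γ)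
        = ∫ _ξ, (∫ x : UnitAddCircle × UnitAddCircle,
            φ (τ + (↑Δt : UnitAddCircle), x)) ∂γ := by
          exact integral_congr_ae (Eventually.of_forall fun ξ => h2 ξ)
      _ = ∫ x : UnitAddCircle × UnitAddCircle, φ (τ + (↑Δt : UnitAddCircle), x) := by
          simp
  -- zero spatial mean of the iterates
  have hg_mean : ∀ τ : UnitAddCircle,
      (∫ x : UnitAddCircle × UnitAddCircle, g (τ, x)) = 0 := by
    intro τ
    have h1 : (∫ x : UnitAddCircle × UnitAddCircle, g (τ, x)) =
        ∫ x : UnitAddCircle × UnitAddCircle, v₁ (τ + (↑(Δt / 2) : UnitAddCircle), x.2) :=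
      integral_congr_ae (Eventually.of_forall fun x => hg τ x)
    rw [h1]
    have h2 := integral_map (μ := (volume : Measure UnitAddCircle).prod volume)
      (φ := Prod.snd)
      (f := fun y : UnitAddCircle => v₁ (τ + (↑(Δt / 2) : UnitAddCircle), y))
      measurable_snd.aemeasurable
      ((hv₁_cont.comp (continuous_const.prodMk continuous_id)).stronglyMeasurable.aestronglyMeasurable)
    rw [Measure.map_snd_prod] at h2
    simp only [measure_univ, one_smul] at h2
    rw [show (volume : Measure (UnitAddCircle × UnitAddCircle)) =
      (volume : Measure UnitAddCircle).prod volume from rfl]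
    rw [← h2]
    exact hv₁_mean _
  have hmean_iter : ∀ (n : ℕ) (τ : UnitAddCircle),
      (∫ x : UnitAddCircle × UnitAddCircle, (I^[n] g) (τ, x)) = 0 := by
    intro n
    induction n with
    | zero => simpa using hg_mean
    | succ n ih =>
      intro τ
      have he : ∀ x : UnitAddCircle × UnitAddCircle,
          (I^[n + 1] g) (τ, x) = (I (I^[n] g)) (τ, x) := fun x => by
        rw [Function.iterate_succ_apply']
      rw [integral_congr_ae (Eventually.of_forall fun x => he x)]
      rw [hmean_shift (I^[n] g) (C * Real.exp (-ρ * n)) (hgm_iter n) (hdecay n) τ]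
      exact ih _
  -- define vhat
  set vhat : UnitAddCircle × (UnitAddCircle × UnitAddCircle) → ℝ :=
    fun z => Δt * ∑' n : ℕ, (I^[n] g) z with hvhat_def
  -- boundedness of vhat
  have hvb : ∀ z, |vhat z| ≤ |Δt| * ∑' n : ℕ, C * Real.exp (-ρ * n) := by
    intro z
    rw [show vhat z = Δt * ∑' n : ℕ, (I^[n] g) z from rfl, abs_mul]
    refine mul_le_mul_of_nonneg_left ?_ (abs_nonneg _)
    have h1 := tsum_of_norm_bounded (f := fun n : ℕ => (I^[n] g) z) hexp.hasSum
      (fun n => by simpa [Real.norm_eq_abs] using hdecay n z)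
    simpa [Real.norm_eq_abs] using h1
  -- measurability of vhat
  have hvm : Measurable vhat := by
    rw [hvhat_def]
    refine measurable_const.mul ?_
    apply measurable_of_tendsto_metrizable
      (f := fun N z => ∑ n ∈ Finset.range N, (I^[n] g) z)
    · exact fun N => Finset.measurable_sum _ fun n _ => hgm_iter n
    · exact tendsto_pi_nhds.2 fun z => (hsz z).hasSum.tendsto_sum_nat
  -- the fixed point equation
  have hvfix : ∀ z, vhat z = I vhat z + Δt * g z := by
    intro z
    have hIv : I vhat z = Δt * ∑' n : ℕ, (I^[n + 1] g) z := by
      rw [hI' vhat z]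
      have he : (fun ξ => vhat (K z ξ)) =
          fun ξ => Δt * ∑' n : ℕ, (I^[n] g) (K z ξ) := rfl
      rw [he, integral_const_mul]
      congr 1
      have hfmeas : ∀ n : ℕ, AEStronglyMeasurable (fun ξ => (I^[n] g) (K z ξ)) γ :=
        fun n => ((hgm_iter n).comp (hKzm z)).aestronglyMeasurable
      have hfin : (∑' n : ℕ, ∫⁻ ξ, ‖(I^[n] g) (K z ξ)‖₊ ∂γ) ≠ ⊤ := by
        have hb : ∀ n : ℕ, (∫⁻ ξ, ‖(I^[n] g) (K z ξ)‖₊ ∂γ) ≤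
            ENNReal.ofReal (C * Real.exp (-ρ * n)) := by
          intro n
          have h1 : ∀ ξ, (‖(I^[n] g) (K z ξ)‖₊ : ENNReal) ≤
              ENNReal.ofReal (C * Real.exp (-ρ * n)) := fun ξ => by
            rw [← ENNReal.ofReal_coe_nnreal, coe_nnnorm]
            exact ENNReal.ofReal_le_ofReal
              (by simpa [Real.norm_eq_abs] using hdecay n (K z ξ))
          calc (∫⁻ ξ, ‖(I^[n] g) (K z ξ)‖₊ ∂γ)
              ≤ ∫⁻ _, ENNReal.ofReal (C * Real.exp (-ρ * n)) ∂γ := lintegral_mono h1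
            _ = ENNReal.ofReal (C * Real.exp (-ρ * n)) := by simp [measure_univ]
        refine ne_top_of_le_ne_top ?_ (ENNReal.tsum_le_tsum hb)
        rw [← ENNReal.ofReal_tsum_of_nonneg (fun n => by positivity) hexp]
        exact ENNReal.ofReal_ne_top
      rw [integral_tsum hfmeas hfin]
      refine tsum_congr fun n => ?_
      rw [Function.iterate_succ_apply']
      exact (hI' (I^[n] g) z).symm
    have hsplit := (hsz z).tsum_eq_zero_add
    rw [hIv]
    simp only [Function.iterate_zero_apply] at hsplit
    show Δt * (∑' n : ℕ, (I^[n] g) z) = Δt * ∑' n : ℕ, (I^[n + 1] g) z + Δt * g z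
    rw [hsplit]
    ring
  -- zero mean of vhat
  have hvmean : ∀ τ : UnitAddCircle,
      (∫ x : UnitAddCircle × UnitAddCircle, vhat (τ, x)) = 0 := by
    intro τ
    have he : (fun x : UnitAddCircle × UnitAddCircle => vhat (τ, x)) =
        fun x => Δt * ∑' n : ℕ, (I^[n] g) (τ, x) := rfl
    rw [he, integral_const_mul]
    have hfmeas : ∀ n : ℕ, AEStronglyMeasurable
        (fun x : UnitAddCircle × UnitAddCircle => (I^[n] g) (τ, x)) volume :=
      fun n => ((hgm_iter n).comp measurable_prodMk_left).aestronglyMeasurable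
    have hfin : (∑' n : ℕ, ∫⁻ x : UnitAddCircle × UnitAddCircle,
        ‖(I^[n] g) (τ, x)‖₊ ∂volume) ≠ ⊤ := by
      have hb : ∀ n : ℕ, (∫⁻ x : UnitAddCircle × UnitAddCircle,
          ‖(I^[n] g) (τ, x)‖₊ ∂volume) ≤ ENNReal.ofReal (C * Real.exp (-ρ * n)) := by
        intro n
        have h1 : ∀ x : UnitAddCircle × UnitAddCircle, (‖(I^[n] g) (τ, x)‖₊ : ENNReal) ≤
            ENNReal.ofReal (C * Real.exp (-ρ * n)) := fun x => by
          rw [← ENNReal.ofReal_coe_nnreal, coe_nnnorm]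
          exact ENNReal.ofReal_le_ofReal
            (by simpa [Real.norm_eq_abs] using hdecay n (τ, x))
        calc (∫⁻ x : UnitAddCircle × UnitAddCircle, ‖(I^[n] g) (τ, x)‖₊ ∂volume)
            ≤ ∫⁻ _, ENNReal.ofReal (C * Real.exp (-ρ * n)) ∂volume := lintegral_mono h1
          _ = ENNReal.ofReal (C * Real.exp (-ρ * n)) := by simp [measure_univ]
      refine ne_top_of_le_ne_top ?_ (ENNReal.tsum_le_tsum hb)
      rw [← ENNReal.ofReal_tsum_of_nonneg (fun n => by positivity) hexp]
      exact ENNReal.ofReal_ne_top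
    rw [integral_tsum hfmeas hfin]
    have : ∀ n : ℕ, (∫ x : UnitAddCircle × UnitAddCircle, (I^[n] g) (τ, x)) = 0 :=
      fun n => hmean_iter n τ
    simp [this]
  refine ⟨vhat, fun z => rfl, ?_, hvm, ⟨_, hvb⟩, hvfix, hvmean, ?_⟩
  · -- uniform convergence
    have hu2 : Summable (fun n : ℕ => |Δt| * (C * Real.exp (-ρ * n))) := hexp.mul_left _
    have ht := tendstoUniformly_tsum_nat hu2
      (f := fun (n : ℕ) (z : UnitAddCircle × (UnitAddCircle × UnitAddCircle)) =>
        Δt * (I^[n] g) z)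
      (fun n z => by
        rw [Real.norm_eq_abs, abs_mul]
        exact mul_le_mul_of_nonneg_left (hdecay n z) (abs_nonneg Δt))
    have e1 : (fun (n : ℕ) (z : UnitAddCircle × (UnitAddCircle × UnitAddCircle)) =>
        Δt * ∑ i ∈ Finset.range n, (I^[i] g) z) =
        fun (n : ℕ) z => ∑ i ∈ Finset.range n, Δt * (I^[i] g) z := by
      funext n z; rw [Finset.mul_sum]
    have e2 : vhat = fun z => ∑' n : ℕ, Δt * (I^[n] g) z := by
      funext z; exact tsum_mul_left.symm
    rw [e1, e2]
    exact ht
  · -- uniqueness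
    intro w hwm hwB hwmean hwe
    obtain ⟨Mw, hwb⟩ := hwB
    set Mv : ℝ := |Δt| * ∑' n : ℕ, C * Real.exp (-ρ * n) with hMv_def
    set u : UnitAddCircle × (UnitAddCircle × UnitAddCircle) → ℝ :=
      fun z => w z - vhat z with hu_def
    have hum : Measurable u := hwm.sub hvm
    have hub : ∀ z, |u z| ≤ Mw + Mv := by
      intro z
      exact (abs_sub (w z) (vhat z)).trans (add_le_add (hwb z) (hvb z))
    have humean : ∀ τ : UnitAddCircle,
        (∫ x : UnitAddCircle × UnitAddCircle, u (τ, x)) = 0 := by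
      intro τ
      have hiw : Integrable (fun x : UnitAddCircle × UnitAddCircle => w (τ, x)) volume :=
        (integrable_const Mw).mono'
          ((hwm.comp measurable_prodMk_left).aestronglyMeasurable)
          (Eventually.of_forall fun x => by simpa [Real.norm_eq_abs] using hwb (τ, x))
      have hiv : Integrable (fun x : UnitAddCircle × UnitAddCircle => vhat (τ, x)) volume :=
        (integrable_const Mv).mono'
          ((hvm.comp measurable_prodMk_left).aestronglyMeasurable)
          (Eventually.of_forall fun x => by simpa [Real.norm_eq_abs] using hvb (τ, x))
      have he : (fun x : UnitAddCircle × UnitAddCircle => u (τ, x)) =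
          fun x => w (τ, x) - vhat (τ, x) := rfl
      rw [he, integral_sub hiw hiv, hwmean τ, hvmean τ, sub_zero]
    have hufix : ∀ z, I u z = u z := by
      intro z
      have h1 : I u z = ∫ ξ, (w (K z ξ) - vhat (K z ξ)) ∂γ := hI' u z
      rw [h1, integral_sub (hIntK w Mw hwm hwb z) (hIntK vhat Mv hvm hvb z),
        ← hI' w z, ← hI' vhat z]
      show I w z - I vhat z = w z - vhat z
      rw [hwe z, hvfix z]; ring
    have hiter : ∀ n : ℕ, I^[n] u = u := fun n =>
      Function.iterate_fixed (funext hufix) n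
    have hten := hmix u hum ⟨Mw + Mv, hub⟩ humean
    have he : (fun n : ℕ => ⨆ z, |(I^[n] u) z|) = fun _ : ℕ => ⨆ z, |u z| :=
      funext fun n => by rw [hiter n]
    rw [he] at hten
    have hc : (⨆ z, |u z|) = 0 := tendsto_nhds_unique tendsto_const_nhds hten
    funext z
    have hle : |u z| ≤ 0 := by
      rw [← hc]
      exact le_ciSup ⟨Mw + Mv, by rintro _ ⟨z', rfl⟩; exact hub z'⟩ z
    have h0 : u z = 0 := abs_nonpos_iff.1 hle
    exact sub_eq_zero.1 h0
end

section
/- Assume there exists a discrete corrector v̂₁ for v₁, i.e., a bounded measurable function v̂₁ : ℝ × ℝ² → ℝ, 1-periodic in each argument, such that for every i ≥ 0, E[v̂₁(t_{i+1}, X^{i+1}) | 𝓕_i] = v̂₁(t_i, Xⁱ) − Δt·v₁(t_{i+1/2}, x₂ⁱ) almost surely. Then the second moment of the first component of the numerical solution grows at most linearly in the number of steps: sup_{n≥1} E[(x₁ⁿ)²]/n < ∞. -/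
open MeasureTheory ProbabilityTheory Real


lemma aux_gauss_sq_int : Integrable (fun x : ℝ => x ^ 2) (gaussianReal 0 1) := by
  rw [gaussianReal_of_var_ne_zero 0 one_ne_zero,
    integrable_withDensity_iff (measurable_gaussianPDF 0 1)
      (ae_of_all _ fun x => ENNReal.ofReal_lt_top)]
  have heq : (fun x : ℝ => x ^ 2 * (gaussianPDF 0 1 x).toReal)
      = fun x : ℝ => (Real.sqrt (2 * π))⁻¹ * (x ^ (2:ℝ) * Real.exp (-(1/2) * x ^ 2)) := by
    funext x
    rw [gaussianPDF, ENNReal.toReal_ofReal (gaussianPDFReal_nonneg _ _ _)]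
    rw [gaussianPDFReal]
    rw [show ((2:ℝ)) = ((2:ℕ):ℝ) by norm_num, Real.rpow_natCast]
    push_cast
    rw [show -(x - 0) ^ 2 / (2 * 1) = -(1/2) * x ^ 2 by ring]
    ring_nf
  rw [heq]
  exact (integrable_rpow_mul_exp_neg_mul_sq (by norm_num : (0:ℝ) < 1/2)
    (by norm_num : (-1:ℝ) < 2)).const_mul _

lemma aux_gauss_mem2 : MemLp (id : ℝ → ℝ) 2 (gaussianReal 0 1) := by
  rw [memLp_two_iff_integrable_sq aestronglyMeasurable_id]
  exact aux_gauss_sq_int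

lemma aux_gauss_mean : ∫ x, x ∂(gaussianReal 0 1) = 0 := by
  have hneg : Measure.map (fun x : ℝ => -x) (gaussianReal 0 1) = gaussianReal 0 1 := by
    have := gaussianReal_map_const_mul (μ := 0) (v := 1) (-1)
    simp only [neg_one_mul, mul_zero] at this
    rw [this]
    congr 1
    ext
    norm_num
  have hint : Integrable (id : ℝ → ℝ) (gaussianReal 0 1) :=
    aux_gauss_mem2.integrable one_le_two
  have h1 : ∫ x, x ∂(gaussianReal 0 1) = ∫ x, -x ∂(gaussianReal 0 1) := by
    conv_lhs => rw [← hneg]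
    exact integral_map (f := fun x : ℝ => x) measurable_neg.aemeasurable aestronglyMeasurable_id
  rw [integral_neg] at h1
  linarith

lemma aux_sq_bound {x w Mv : ℝ} (h : |w| ≤ Mv) : (x - w)^2 ≤ 2*x^2 + 2*Mv^2 := by
  nlinarith [sq_nonneg (x + w), abs_nonneg w, sq_abs w]

lemma aux_arith {I an a0 C Mv n : ℝ} (h2 : I ≤ 2*an + 2*Mv^2) (h4 : an ≤ a0 + n*C)
    (hn1 : 1 ≤ n) (ha0 : 0 ≤ a0) (hC : 0 ≤ C) : I ≤ (2*a0 + 2*C + 2*Mv^2)*n := by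
  nlinarith [mul_nonneg (sub_nonneg.mpr hn1) ha0, mul_nonneg (sub_nonneg.mpr hn1) hC,
    mul_nonneg (sub_nonneg.mpr hn1) (sq_nonneg Mv)]

lemma aux_mem2 {Ω : Type*} [MeasureSpace Ω] [IsProbabilityMeasure (volume : Measure Ω)]
    {f : Ω → ℝ} (hf : Measurable f) {C : ℝ} (h : ∀ ω, |f ω| ≤ C) :
    MemLp f 2 (volume : Measure Ω) :=
  MemLp.of_bound hf.aestronglyMeasurable C
    (ae_of_all _ fun ω => by simpa [Real.norm_eq_abs] using h ω)

lemma aux_int {Ω : Type*} [MeasureSpace Ω] [IsProbabilityMeasure (volume : Measure Ω)]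
    {f : Ω → ℝ} (hf : Measurable f) {C : ℝ} (h : ∀ ω, |f ω| ≤ C) :
    Integrable f (volume : Measure Ω) :=
  (aux_mem2 hf h).integrable one_le_two

lemma aux_int_mul {Ω : Type*} [MeasureSpace Ω] [IsProbabilityMeasure (volume : Measure Ω)]
    {f g : Ω → ℝ} (hf : MemLp f 2 (volume : Measure Ω)) (hg : MemLp g 2 (volume : Measure Ω)) :
    Integrable (fun ω => f ω * g ω) (volume : Measure Ω) := by
  have h : MemLp (f • g) 1 (volume : Measure Ω) :=
    hg.smul hf (hpqr := ⟨by rw [ENNReal.inv_two_add_inv_two, inv_one]⟩)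
  rw [← memLp_one_iff_integrable]
  exact h

/-- given a bounded measurable discrete corrector `v̂₁` for `v₁`
(satisfying `E[v̂₁(t_{i+1}, X^{i+1}) | 𝓕_i] = v̂₁(t_i, Xⁱ) − Δt·v₁(t_{i+1/2}, x₂ⁱ)` a.s.),
the second moment of the first component of the stochastic structure-preserving scheme
grows at most linearly in the number of steps. -/
theorem stmt_10
    (σ : ℝ) (hσ : 0 < σ) (N : ℕ) (hN : 0 < N) (Δt : ℝ) (hΔt : Δt = 1 / (N : ℝ))
    (v₁ v₂ : ℝ → ℝ → ℝ)
    (hv₁_meas : Measurable (Function.uncurry v₁))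
    (hv₂_meas : Measurable (Function.uncurry v₂))
    (hv₁_bdd : ∃ M : ℝ, ∀ t x, |v₁ t x| ≤ M) (hv₂_bdd : ∃ M : ℝ, ∀ t x, |v₂ t x| ≤ M)
    (hv₁_per : ∀ t x, v₁ (t + 1) x = v₁ t x ∧ v₁ t (x + 1) = v₁ t x)
    (hv₂_per : ∀ t x, v₂ (t + 1) x = v₂ t x ∧ v₂ t (x + 1) = v₂ t x)
    {Ω : Type*} [MeasureSpace Ω] [IsProbabilityMeasure (volume : Measure Ω)]
    (ξ₁ ξ₂ : ℕ → Ω → ℝ)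
    (hξ₁_meas : ∀ i, Measurable (ξ₁ i)) (hξ₂_meas : ∀ i, Measurable (ξ₂ i))
    (hξ₁_law : ∀ i, Measure.map (ξ₁ i) volume = gaussianReal 0 1)
    (hξ₂_law : ∀ i, Measure.map (ξ₂ i) volume = gaussianReal 0 1)
    (hξ_indep : iIndepFun
      (fun p : ℕ × Bool => if p.2 then ξ₁ p.1 else ξ₂ p.1) volume)
    (x₀ : ℝ × ℝ) (X : ℕ → Ω → ℝ × ℝ)
    (hX₀ : ∀ ω, X 0 ω = x₀)
    (hX_rec : ∀ (i : ℕ) (ω : Ω), X (i + 1) ω =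
      ((X i ω).1 + v₁ (((i : ℝ) + 1/2) * Δt) (X i ω).2 * Δt
          + σ * Real.sqrt Δt * ξ₁ i ω,
       (X i ω).2 + v₂ (((i : ℝ) + 1/2) * Δt)
            ((X i ω).1 + v₁ (((i : ℝ) + 1/2) * Δt) (X i ω).2 * Δt) * Δt
          + σ * Real.sqrt Δt * ξ₂ i ω))
    (vhat : ℝ → ℝ × ℝ → ℝ)
    (hvhat_meas : Measurable (fun z : ℝ × (ℝ × ℝ) => vhat z.1 z.2))
    (hvhat_bdd : ∃ M : ℝ, ∀ t x, |vhat t x| ≤ M)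
    (hvhat_per : ∀ t x, vhat (t + 1) x = vhat t x ∧
      vhat t (x + (1, 0)) = vhat t x ∧ vhat t (x + (0, 1)) = vhat t x)
    (hcorr : ∀ i : ℕ,
      condExp (⨆ j ∈ Set.Iic i, MeasurableSpace.comap (X j) inferInstance) volume
          (fun ω => vhat (((i : ℝ) + 1) * Δt) (X (i + 1) ω))
        =ᵐ[volume]
          fun ω => vhat ((i : ℝ) * Δt) (X i ω)
            - Δt * v₁ (((i : ℝ) + 1/2) * Δt) (X i ω).2) :
    ∃ B : ℝ, ∀ n : ℕ, 1 ≤ n → (∫ ω, ((X n ω).1) ^ 2) / (n : ℝ) ≤ B := by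
  obtain ⟨M₁, hM₁⟩ := hv₁_bdd
  obtain ⟨Mv, hMv⟩ := hvhat_bdd
  have hM₁0 : 0 ≤ M₁ := le_trans (abs_nonneg _) (hM₁ 0 0)
  have hMv0 : 0 ≤ Mv := le_trans (abs_nonneg _) (hMv 0 0)
  -- sections are measurable
  have hv₁t : ∀ t, Measurable (v₁ t) := fun t =>
    hv₁_meas.comp (measurable_const.prodMk measurable_id)
  have hv₂t : ∀ t, Measurable (v₂ t) := fun t =>
    hv₂_meas.comp (measurable_const.prodMk measurable_id)
  have hvht : ∀ t, Measurable (vhat t) := fun t =>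
    hvhat_meas.comp (measurable_const.prodMk measurable_id)
  -- the driving noise family
  set ξf : ℕ × Bool → Ω → ℝ := fun p => if p.2 then ξ₁ p.1 else ξ₂ p.1 with hξf_def
  have hξf_meas : ∀ p, Measurable (ξf p) := by
    rintro ⟨i, b⟩; cases b
    · simpa [ξf] using hξ₂_meas i
    · simpa [ξf] using hξ₁_meas i
  -- σ-algebra generated by noise up to time n (exclusive)
  set G : ℕ → MeasurableSpace Ω :=
    fun n => ⨆ p ∈ {q : ℕ × Bool | q.1 < n}, MeasurableSpace.comap (ξf p) inferInstance
    with hG_def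
  have hG_le : ∀ n, G n ≤ (inferInstance : MeasurableSpace Ω) :=
    fun n => iSup₂_le fun p _ => (hξf_meas p).comap_le
  have hξG : ∀ (p : ℕ × Bool) n, p.1 < n → Measurable[G n] (ξf p) := fun p n h =>
    measurable_iff_comap_le.mpr (le_biSup (fun p : ℕ × Bool => MeasurableSpace.comap (ξf p) inferInstance) h)
  have hξ₁G : ∀ i n, i < n → Measurable[G n] (ξ₁ i) := by
    intro i n h
    have := hξG (i, true) n h
    simpa [ξf] using this
  have hξ₂G : ∀ i n, i < n → Measurable[G n] (ξ₂ i) := by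
    intro i n h
    have := hξG (i, false) n h
    simpa [ξf] using this
  -- X j is measurable w.r.t. G n for j ≤ n
  have hXG : ∀ n j, j ≤ n → Measurable[G n] (X j) := by
    intro n j
    induction j with
    | zero =>
      intro _
      have h0 : X 0 = fun _ => x₀ := funext hX₀
      rw [h0]; exact measurable_const
    | succ j ih =>
      intro hj
      have hXj := ih (Nat.le_of_succ_le hj)
      have hx1 : Measurable[G n] fun ω => (X j ω).1 := measurable_fst.comp hXj
      have hx2 : Measurable[G n] fun ω => (X j ω).2 := measurable_snd.comp hXj
      have hjn : j < n := hj
      have hrec : X (j+1) = fun ω =>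
        ((X j ω).1 + v₁ (((j : ℝ) + 1/2) * Δt) (X j ω).2 * Δt
            + σ * Real.sqrt Δt * ξ₁ j ω,
         (X j ω).2 + v₂ (((j : ℝ) + 1/2) * Δt)
              ((X j ω).1 + v₁ (((j : ℝ) + 1/2) * Δt) (X j ω).2 * Δt) * Δt
            + σ * Real.sqrt Δt * ξ₂ j ω) := funext (hX_rec j)
      rw [hrec]
      have hA : Measurable[G n] fun ω =>
          (X j ω).1 + v₁ (((j : ℝ) + 1/2) * Δt) (X j ω).2 * Δt :=
        hx1.add (((hv₁t _).comp hx2).mul_const Δt)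
      refine Measurable.prodMk (hA.add ((hξ₁G j n hjn).const_mul _)) ?_
      exact (hx2.add (((hv₂t _).comp hA).mul_const Δt)).add ((hξ₂G j n hjn).const_mul _)
  have hXmeas : ∀ n, Measurable (X n) := fun n => (hXG n n le_rfl).mono (hG_le n) le_rfl
  -- the filtration
  set F : ℕ → MeasurableSpace Ω :=
    fun n => ⨆ j ∈ Set.Iic n, MeasurableSpace.comap (X j) inferInstance with hF_def
  have hcorr' : ∀ i : ℕ,
      condExp (F i) volume (fun ω => vhat (((i : ℝ) + 1) * Δt) (X (i + 1) ω))
        =ᵐ[volume]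
          (fun ω => vhat ((i : ℝ) * Δt) (X i ω)
            - Δt * v₁ (((i : ℝ) + 1/2) * Δt) (X i ω).2) := hcorr
  have hF_le : ∀ n, F n ≤ (inferInstance : MeasurableSpace Ω) :=
    fun n => iSup₂_le fun j _ => (hXmeas j).comap_le
  have hXF : ∀ n, Measurable[F n] (X n) := fun n =>
    measurable_iff_comap_le.mpr (le_biSup (fun j => MeasurableSpace.comap (X j) inferInstance) (Set.mem_Iic.mpr le_rfl))
  have hFG : ∀ n, F n ≤ G n := fun n =>
    iSup₂_le fun j hj => measurable_iff_comap_le.mp (hXG n j hj)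
  have hSF : ∀ n, SigmaFinite ((volume : Measure Ω).trim (hF_le n)) := by
    intro n
    have : IsFiniteMeasure ((volume : Measure Ω).trim (hF_le n)) := isFiniteMeasure_trim _
    infer_instance
  -- independence of the new noise from G n
  have hIndep : ∀ n, Indep (G n)
      (MeasurableSpace.comap (ξ₁ n) inferInstance) volume := by
    intro n
    have h := (iIndepFun_iff_iIndep _ _ _).mp hξ_indep
    have hdisj : Disjoint {q : ℕ × Bool | q.1 < n} ({(n, true)} : Set (ℕ × Bool)) := by
      rw [Set.disjoint_left]
      rintro ⟨a, b⟩ ha hb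
      simp only [Set.mem_singleton_iff, Prod.mk.injEq] at hb
      simp only [Set.mem_setOf_eq] at ha
      omega
    have h2 := indep_iSup_of_disjoint (fun p => (hξf_meas p).comap_le) h hdisj
    refine indep_of_indep_of_le_right h2 ?_
    have hle : MeasurableSpace.comap (ξf (n, true)) inferInstance ≤
        ⨆ p ∈ ({(n, true)} : Set (ℕ × Bool)), MeasurableSpace.comap (ξf p) inferInstance :=
      le_biSup (fun p : ℕ × Bool => MeasurableSpace.comap (ξf p) inferInstance) rfl
    have : ξ₁ n = ξf (n, true) := by simp [ξf]
    rw [this]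
    exact hle
  have hIndepFun : ∀ n (g : Ω → ℝ), Measurable[G n] g →
      IndepFun g (ξ₁ n) volume := fun n g hg =>
    (IndepFun_iff_Indep _ _ _).mpr
      (indep_of_indep_of_le_left (hIndep n) (measurable_iff_comap_le.mp hg))
  -- gaussian moments of ξ₁
  have hξmem : ∀ i, MemLp (ξ₁ i) 2 (volume : Measure Ω) := by
    intro i
    have h : MemLp (id ∘ ξ₁ i) 2 (volume : Measure Ω) := by
      rw [← memLp_map_measure_iff aestronglyMeasurable_id (hξ₁_meas i).aemeasurable,
        hξ₁_law i]
      exact aux_gauss_mem2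
    simpa [Function.comp] using h
  have hξmean : ∀ i, ∫ ω, ξ₁ i ω = 0 := by
    intro i
    have h : ∫ x, x ∂(Measure.map (ξ₁ i) (volume : Measure Ω)) = ∫ ω, ξ₁ i ω :=
      integral_map (hξ₁_meas i).aemeasurable aestronglyMeasurable_id
    rw [hξ₁_law i, aux_gauss_mean] at h
    exact h.symm
  have hξsq : ∀ i, ∫ ω, (ξ₁ i ω) ^ 2 = ∫ x, x ^ 2 ∂(gaussianReal 0 1) := by
    intro i
    have h : ∫ x, x ^ 2 ∂(Measure.map (ξ₁ i) (volume : Measure Ω)) = ∫ ω, (ξ₁ i ω) ^ 2 :=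
      integral_map (hξ₁_meas i).aemeasurable
        (measurable_id.pow_const 2).aestronglyMeasurable
    rw [hξ₁_law i] at h
    exact h.symm
  -- second moments of the scheme
  have hXmem : ∀ n, MemLp (fun ω => (X n ω).1) 2 (volume : Measure Ω) ∧
      MemLp (fun ω => (X n ω).2) 2 (volume : Measure Ω) := by
    intro n
    induction n with
    | zero =>
      constructor
      · have h0 : (fun ω : Ω => (X 0 ω).1) = fun _ => x₀.1 := by
          funext ω; rw [hX₀]
        rw [h0]; exact memLp_const _
      · have h0 : (fun ω : Ω => (X 0 ω).2) = fun _ => x₀.2 := by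
          funext ω; rw [hX₀]
        rw [h0]; exact memLp_const _
    | succ n ih =>
      have hb1 : MemLp (fun ω => v₁ (((n:ℝ)+1/2)*Δt) (X n ω).2 * Δt) 2
          (volume : Measure Ω) := by
        refine aux_mem2 (((hv₁t _).comp (measurable_snd.comp (hXmeas n))).mul_const Δt)
          (C := M₁ * |Δt|) fun ω => ?_
        rw [abs_mul]
        exact mul_le_mul_of_nonneg_right (hM₁ _ _) (abs_nonneg _)
      have hb2 : MemLp (fun ω => v₂ (((n:ℝ)+1/2)*Δt)
          ((X n ω).1 + v₁ (((n:ℝ)+1/2)*Δt) (X n ω).2 * Δt) * Δt) 2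
          (volume : Measure Ω) := by
        obtain ⟨M₂, hM₂⟩ := hv₂_bdd
        refine aux_mem2 (((hv₂t _).comp ((measurable_fst.comp (hXmeas n)).add
          (((hv₁t _).comp (measurable_snd.comp (hXmeas n))).mul_const Δt))).mul_const Δt)
          (C := M₂ * |Δt|) fun ω => ?_
        rw [abs_mul]
        exact mul_le_mul_of_nonneg_right (hM₂ _ _) (abs_nonneg _)
      constructor
      · have h1 : (fun ω : Ω => (X (n+1) ω).1) = fun ω =>
            (X n ω).1 + v₁ (((n:ℝ)+1/2)*Δt) (X n ω).2 * Δt + σ * Real.sqrt Δt * ξ₁ n ω := by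
          funext ω; rw [hX_rec n ω]
        rw [h1]
        exact (ih.1.add hb1).add ((hξmem n).const_mul _)
      · have h2 : (fun ω : Ω => (X (n+1) ω).2) = fun ω =>
            (X n ω).2 + v₂ (((n:ℝ)+1/2)*Δt)
              ((X n ω).1 + v₁ (((n:ℝ)+1/2)*Δt) (X n ω).2 * Δt) * Δt
              + σ * Real.sqrt Δt * ξ₂ n ω := by
          funext ω; rw [hX_rec n ω]
        rw [h2]
        have hξ₂mem : MemLp (ξ₂ n) 2 (volume : Measure Ω) := by
          have h : MemLp (id ∘ ξ₂ n) 2 (volume : Measure Ω) := by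
            rw [← memLp_map_measure_iff aestronglyMeasurable_id (hξ₂_meas n).aemeasurable,
              hξ₂_law n]
            exact aux_gauss_mem2
          simpa [Function.comp] using h
        exact (ih.2.add hb2).add (hξ₂mem.const_mul _)
  -- the auxiliary martingale-like process
  set Mn : ℕ → Ω → ℝ := fun n ω => (X n ω).1 + vhat ((n:ℝ)*Δt) (X n ω) with hMn_def
  set Rn : ℕ → Ω → ℝ := fun n ω =>
    vhat (((n:ℝ)+1)*Δt) (X (n+1) ω)
      - (vhat ((n:ℝ)*Δt) (X n ω) - Δt * v₁ (((n:ℝ)+1/2)*Δt) (X n ω).2) with hRn_def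
  have hMnF : ∀ n, Measurable[F n] (Mn n) := fun n =>
    (measurable_fst.comp (hXF n)).add ((hvht _).comp (hXF n))
  have hMnG : ∀ n, Measurable[G n] (Mn n) := fun n =>
    (measurable_fst.comp (hXG n n le_rfl)).add ((hvht _).comp (hXG n n le_rfl))
  have hMn_mem : ∀ n, MemLp (Mn n) 2 (volume : Measure Ω) := fun n =>
    (hXmem n).1.add (aux_mem2 ((hvht _).comp (hXmeas n)) fun ω => hMv _ _)
  have hRn_meas : ∀ n, Measurable (Rn n) := fun n =>
    ((hvht _).comp (hXmeas (n+1))).sub (((hvht _).comp (hXmeas n)).sub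
      (((hv₁t _).comp (measurable_snd.comp (hXmeas n))).const_mul Δt))
  have hRn_bdd : ∀ n ω, |Rn n ω| ≤ 2*Mv + |Δt| * M₁ := by
    intro n ω
    have h1 := hMv (((n:ℝ)+1)*Δt) (X (n+1) ω)
    have h2 := hMv ((n:ℝ)*Δt) (X n ω)
    have h3 : |Δt * v₁ (((n:ℝ)+1/2)*Δt) (X n ω).2| ≤ |Δt| * M₁ := by
      rw [abs_mul]
      exact mul_le_mul_of_nonneg_left (hM₁ _ _) (abs_nonneg _)
    rw [abs_le] at h1 h2 h3 ⊢
    constructor <;> (simp only [hRn_def]; linarith)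
  have hRn_mem : ∀ n, MemLp (Rn n) 2 (volume : Measure Ω) := fun n =>
    aux_mem2 (hRn_meas n) (hRn_bdd n)
  have hRn_int : ∀ n, Integrable (Rn n) (volume : Measure Ω) := fun n =>
    aux_int (hRn_meas n) (hRn_bdd n)
  -- the corrector identity : conditional expectation of Rn is 0
  have hcondR : ∀ n, (volume : Measure Ω)[Rn n | F n] =ᵐ[volume] 0 := by
    intro n
    haveI := hSF n
    have hA_int : Integrable (fun ω => vhat (((n:ℝ)+1)*Δt) (X (n+1) ω))
        (volume : Measure Ω) :=
      aux_int ((hvht _).comp (hXmeas (n+1))) fun ω => hMv _ _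
    have hB_meas : Measurable[F n] (fun ω => vhat ((n:ℝ)*Δt) (X n ω)
        - Δt * v₁ (((n:ℝ)+1/2)*Δt) (X n ω).2) :=
      ((hvht _).comp (hXF n)).sub
        (((hv₁t _).comp (measurable_snd.comp (hXF n))).const_mul Δt)
    have hB_int : Integrable (fun ω => vhat ((n:ℝ)*Δt) (X n ω)
        - Δt * v₁ (((n:ℝ)+1/2)*Δt) (X n ω).2) (volume : Measure Ω) := by
      refine aux_int (hB_meas.mono (hF_le n) le_rfl) (C := Mv + |Δt| * M₁) fun ω => ?_
      have h1 := hMv ((n:ℝ)*Δt) (X n ω)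
      have h3 : |Δt * v₁ (((n:ℝ)+1/2)*Δt) (X n ω).2| ≤ |Δt| * M₁ := by
        rw [abs_mul]
        exact mul_le_mul_of_nonneg_left (hM₁ _ _) (abs_nonneg _)
      rw [abs_le] at h1 h3 ⊢
      constructor <;> linarith
    have hsub := condExp_sub (m := F n) (μ := volume) hA_int hB_int
    have hBeq := condExp_of_stronglyMeasurable (hF_le n) hB_meas.stronglyMeasurable hB_int
    have hRneq : Rn n = (fun ω => vhat (((n:ℝ)+1)*Δt) (X (n+1) ω)) -
        (fun ω => vhat ((n:ℝ)*Δt) (X n ω) - Δt * v₁ (((n:ℝ)+1/2)*Δt) (X n ω).2) := rfl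
    rw [hRneq]
    refine hsub.trans ?_
    rw [hBeq]
    filter_upwards [hcorr' n] with ω hω
    simp only [Pi.sub_apply, Pi.zero_apply]
    rw [hω]
    ring
  -- orthogonality: ∫ Mn · Rn = 0
  have hMR : ∀ n, ∫ ω, Mn n ω * Rn n ω = 0 := by
    intro n
    haveI := hSF n
    have hMR_int : Integrable (fun ω => Mn n ω * Rn n ω) (volume : Measure Ω) :=
      aux_int_mul (hMn_mem n) (hRn_mem n)
    have hMR_int' : Integrable (Mn n * Rn n) (volume : Measure Ω) := hMR_int
    have hmul := condExp_mul_of_stronglyMeasurable_left (m := F n) (μ := volume)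
      (hMnF n).stronglyMeasurable hMR_int' (hRn_int n)
    have hzero : (volume : Measure Ω)[Mn n * Rn n | F n] =ᵐ[volume] 0 := by
      refine hmul.trans ?_
      filter_upwards [hcondR n] with ω hω
      simp only [Pi.mul_apply, Pi.zero_apply] at hω ⊢
      rw [hω, mul_zero]
    calc ∫ ω, Mn n ω * Rn n ω = ∫ ω, ((volume : Measure Ω)[Mn n * Rn n | F n]) ω :=
          (integral_condExp (hF_le n)).symm
      _ = 0 := by rw [integral_congr_ae hzero]; simp
  -- orthogonality: ∫ Mn · ξ₁ n = 0
  have hMξ : ∀ n, ∫ ω, Mn n ω * ξ₁ n ω = 0 := by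
    intro n
    have hind := hIndepFun n (Mn n) (hMnG n)
    have h := hind.integral_mul_eq_mul_integral ((hMnG n).mono (hG_le n) le_rfl).aestronglyMeasurable
      (hξ₁_meas n).aestronglyMeasurable
    calc ∫ ω, Mn n ω * ξ₁ n ω = (∫ ω, Mn n ω) * ∫ ω, ξ₁ n ω := h
      _ = 0 := by rw [hξmean n, mul_zero]
  -- one-step recursion for the second moment of Mn
  set c : ℝ := σ * Real.sqrt Δt with hc_def
  set Dn : ℕ → Ω → ℝ := fun n ω => c * ξ₁ n ω + Rn n ω with hDn_def
  have hDn_mem : ∀ n, MemLp (Dn n) 2 (volume : Measure Ω) := fun n =>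
    ((hξmem n).const_mul c).add (hRn_mem n)
  have hMD : ∀ n, Mn (n+1) = fun ω => Mn n ω + Dn n ω := by
    intro n
    funext ω
    simp only [hMn_def, hDn_def, hRn_def]
    rw [hX_rec n ω]
    push_cast
    ring_nf
  set Cξ : ℝ := ∫ x, x ^ 2 ∂(gaussianReal 0 1) with hCξ_def
  have hCξ0 : 0 ≤ Cξ := integral_nonneg fun x => sq_nonneg x
  set CR : ℝ := 2*Mv + |Δt| * M₁ with hCR_def
  have hCR0 : 0 ≤ CR := by positivity
  set C : ℝ := 2*c^2*Cξ + 2*CR^2 with hC_def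
  have hC0 : 0 ≤ C := by positivity
  have hDsq_int : ∀ n, Integrable (fun ω => (Dn n ω)^2) (volume : Measure Ω) := fun n =>
    (hDn_mem n).integrable_sq
  have hξsq_int : ∀ n, Integrable (fun ω => (ξ₁ n ω)^2) (volume : Measure Ω) := fun n =>
    (hξmem n).integrable_sq
  have hDbound : ∀ n, ∫ ω, (Dn n ω)^2 ≤ C := by
    intro n
    have hrhs_int : Integrable (fun ω => 2*c^2*(ξ₁ n ω)^2 + 2*CR^2) (volume : Measure Ω) :=
      ((hξsq_int n).const_mul (2*c^2)).add (integrable_const _)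
    have hmono : ∀ ω, (Dn n ω)^2 ≤ 2*c^2*(ξ₁ n ω)^2 + 2*CR^2 := by
      intro ω
      have h1 := hRn_bdd n ω
      have h2 : (Rn n ω)^2 ≤ CR^2 := by
        nlinarith [abs_nonneg (Rn n ω), sq_abs (Rn n ω)]
      simp only [hDn_def]
      nlinarith [sq_nonneg (c * ξ₁ n ω - Rn n ω)]
    calc ∫ ω, (Dn n ω)^2 ≤ ∫ ω, (2*c^2*(ξ₁ n ω)^2 + 2*CR^2) :=
          integral_mono (hDsq_int n) hrhs_int hmono
      _ = 2*c^2*Cξ + 2*CR^2 := by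
          rw [integral_add ((hξsq_int n).const_mul _) (integrable_const _),
            integral_const_mul, hξsq n]
          simp [measure_univ]
      _ = C := rfl
  have hMDint : ∀ n, Integrable (fun ω => Mn n ω * Dn n ω) (volume : Measure Ω) := fun n =>
    aux_int_mul (hMn_mem n) (hDn_mem n)
  have hMDzero : ∀ n, ∫ ω, Mn n ω * Dn n ω = 0 := by
    intro n
    have hsplit : (fun ω => Mn n ω * Dn n ω)
        = fun ω => c * (Mn n ω * ξ₁ n ω) + Mn n ω * Rn n ω := by
      funext ω; simp only [hDn_def]; ring
    rw [hsplit, integral_add ((aux_int_mul (hMn_mem n) (hξmem n)).const_mul c)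
      (aux_int_mul (hMn_mem n) (hRn_mem n)), integral_const_mul, hMξ n, hMR n]
    ring
  have hstep : ∀ n, ∫ ω, (Mn (n+1) ω)^2 ≤ (∫ ω, (Mn n ω)^2) + C := by
    intro n
    have hsq : (fun ω => (Mn (n+1) ω)^2)
        = fun ω => (Mn n ω)^2 + (2*(Mn n ω * Dn n ω) + (Dn n ω)^2) := by
      funext ω; simp only [hMD n]; ring
    have e1 : ∫ ω, ((Mn n ω)^2 + (2*(Mn n ω * Dn n ω) + (Dn n ω)^2)) =
        (∫ ω, (Mn n ω)^2) + ∫ ω, (2*(Mn n ω * Dn n ω) + (Dn n ω)^2) :=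
      integral_add (hMn_mem n).integrable_sq (((hMDint n).const_mul 2).add (hDsq_int n))
    have e2 : ∫ ω, (2*(Mn n ω * Dn n ω) + (Dn n ω)^2) =
        (∫ ω, 2*(Mn n ω * Dn n ω)) + ∫ ω, (Dn n ω)^2 :=
      integral_add ((hMDint n).const_mul 2) (hDsq_int n)
    have e3 : ∫ ω, 2*(Mn n ω * Dn n ω) = 2 * ∫ ω, Mn n ω * Dn n ω :=
      integral_const_mul 2 _
    rw [hsq, e1, e2, e3, hMDzero n]
    have := hDbound n
    linarith
  have hlin : ∀ n : ℕ, ∫ ω, (Mn n ω)^2 ≤ (∫ ω, (Mn 0 ω)^2) + n * C := by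
    intro n
    induction n with
    | zero => simp
    | succ n ih =>
      have := hstep n
      push_cast
      push_cast at ih
      linarith
  set a0 : ℝ := ∫ ω, (Mn 0 ω)^2 with ha0_def
  have ha00 : 0 ≤ a0 := integral_nonneg fun ω => sq_nonneg _
  refine ⟨2*a0 + 2*C + 2*Mv^2, ?_⟩
  intro n hn
  have hn1 : (1:ℝ) ≤ n := by exact_mod_cast hn
  have hnpos : (0:ℝ) < n := by linarith
  rw [div_le_iff₀ hnpos]
  have hptw : ∀ ω, (X n ω).1 ^ 2 ≤ 2 * (Mn n ω)^2 + 2 * Mv^2 := by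
    intro ω
    have h1 := hMv ((n:ℝ)*Δt) (X n ω)
    have h3 : (X n ω).1 = Mn n ω - vhat ((n:ℝ)*Δt) (X n ω) := by
      simp only [hMn_def]; ring
    rw [h3]
    exact aux_sq_bound h1
  have hint2 : Integrable (fun ω => 2*(Mn n ω)^2 + 2*Mv^2) (volume : Measure Ω) :=
    ((hMn_mem n).integrable_sq.const_mul 2).add (integrable_const _)
  have h2 : ∫ ω, (X n ω).1 ^ 2 ≤ ∫ ω, (2*(Mn n ω)^2 + 2*Mv^2) :=
    integral_mono (hXmem n).1.integrable_sq hint2 hptw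
  have h3 : ∫ ω, (2*(Mn n ω)^2 + 2*Mv^2) = 2*(∫ ω, (Mn n ω)^2) + 2*Mv^2 := by
    rw [integral_add ((hMn_mem n).integrable_sq.const_mul 2) (integrable_const _),
      integral_const_mul]
    simp [measure_univ]
  have h4 := hlin n
  exact aux_arith (h2.trans_eq h3) h4 hn1 ha00 hC0
end

section
/- Assume there exists a discrete corrector v̂₁ for v₁, i.e., a bounded measurable function v̂₁ : ℝ × ℝ² → ℝ, 1-periodic in each argument, such that for every i ≥ 0, E[v̂₁(t_{i+1}, X^{i+1}) | 𝓕_i] = v̂₁(t_i, Xⁱ) − Δt·v₁(t_{i+1/2}, x₂ⁱ) almost surely. Then for every n ≥ 1 the following summation-by-parts identity holds: Δt·Σ_{i=0}^{n−1} E[x₁ⁱ · v₁(t_{i+1/2}, x₂ⁱ)] = Σ_{i=1}^{n} E[v̂₁(t_i, Xⁱ)·(x₁ⁱ − x₁^{i−1})] + v̂₁(t₀, X⁰)·x₁⁰ − E[v̂₁(t_n, Xⁿ)·x₁ⁿ]. -/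
open MeasureTheory ProbabilityTheory

lemma gauss_integrable_id : Integrable (id : ℝ → ℝ) (gaussianReal 0 1) := by
  rw [gaussianReal_of_var_ne_zero 0 one_ne_zero, gaussianPDF_def]
  rw [integrable_withDensity_iff ((measurable_gaussianPDFReal 0 1).ennreal_ofReal)
    (Filter.Eventually.of_forall fun x => ENNReal.ofReal_lt_top)]
  have h : Integrable (fun x : ℝ => x * Real.exp (-(1/2 : ℝ) * x ^ 2)) :=
    integrable_mul_exp_neg_mul_sq (by norm_num)
  refine (h.const_mul ((Real.sqrt (2 * Real.pi * ((1 : NNReal) : ℝ)))⁻¹)).congr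
    (Filter.Eventually.of_forall fun x => ?_)
  dsimp only
  rw [ENNReal.toReal_ofReal (gaussianPDFReal_nonneg _ _ _)]
  simp only [gaussianPDFReal, id, NNReal.coe_one, mul_one, sub_zero]
  have : -x ^ 2 / 2 = -(1/2 : ℝ) * x ^ 2 := by ring
  rw [this]
  ring

lemma integrable_mul_comm' {α : Type*} {mα : MeasurableSpace α} {μ : Measure α} {f g : α → ℝ}
    (h : Integrable (fun x => f x * g x) μ) : Integrable (fun x => g x * f x) μ := by
  rwa [show (fun x => g x * f x) = fun x => f x * g x from funext fun x => mul_comm _ _]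

/-- given a bounded measurable discrete corrector `v̂₁` for `v₁`
(satisfying `E[v̂₁(t_{i+1}, X^{i+1}) | 𝓕_i] = v̂₁(t_i, Xⁱ) − Δt·v₁(t_{i+1/2}, x₂ⁱ)` a.s.),
the summation-by-parts identity
`Δt·Σ_{i<n} E[x₁ⁱ v₁(t_{i+1/2}, x₂ⁱ)] = Σ_{i=1}^{n} E[v̂₁(t_i, Xⁱ)(x₁ⁱ − x₁^{i−1})]
 + v̂₁(t₀, X⁰)x₁⁰ − E[v̂₁(t_n, Xⁿ)x₁ⁿ]` holds for every `n ≥ 1`. -/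
theorem stmt_11
    (σ : ℝ) (hσ : 0 < σ) (N : ℕ) (hN : 0 < N) (Δt : ℝ) (hΔt : Δt = 1 / (N : ℝ))
    (v₁ v₂ : ℝ → ℝ → ℝ)
    (hv₁_meas : Measurable (Function.uncurry v₁))
    (hv₂_meas : Measurable (Function.uncurry v₂))
    (hv₁_bdd : ∃ M : ℝ, ∀ t x, |v₁ t x| ≤ M) (hv₂_bdd : ∃ M : ℝ, ∀ t x, |v₂ t x| ≤ M)
    (hv₁_per : ∀ t x, v₁ (t + 1) x = v₁ t x ∧ v₁ t (x + 1) = v₁ t x)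
    (hv₂_per : ∀ t x, v₂ (t + 1) x = v₂ t x ∧ v₂ t (x + 1) = v₂ t x)
    {Ω : Type*} [MeasureSpace Ω] [IsProbabilityMeasure (volume : Measure Ω)]
    (ξ₁ ξ₂ : ℕ → Ω → ℝ)
    (hξ₁_meas : ∀ i, Measurable (ξ₁ i)) (hξ₂_meas : ∀ i, Measurable (ξ₂ i))
    (hξ₁_law : ∀ i, Measure.map (ξ₁ i) volume = gaussianReal 0 1)
    (hξ₂_law : ∀ i, Measure.map (ξ₂ i) volume = gaussianReal 0 1)
    (hξ_indep : iIndepFun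
      (fun p : ℕ × Bool => if p.2 then ξ₁ p.1 else ξ₂ p.1) volume)
    (x₀ : ℝ × ℝ) (X : ℕ → Ω → ℝ × ℝ)
    (hX₀ : ∀ ω, X 0 ω = x₀)
    (hX_rec : ∀ (i : ℕ) (ω : Ω), X (i + 1) ω =
      ((X i ω).1 + v₁ (((i : ℝ) + 1/2) * Δt) (X i ω).2 * Δt
          + σ * Real.sqrt Δt * ξ₁ i ω,
       (X i ω).2 + v₂ (((i : ℝ) + 1/2) * Δt)
            ((X i ω).1 + v₁ (((i : ℝ) + 1/2) * Δt) (X i ω).2 * Δt) * Δt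
          + σ * Real.sqrt Δt * ξ₂ i ω))
    (vhat : ℝ → ℝ × ℝ → ℝ)
    (hvhat_meas : Measurable (fun z : ℝ × (ℝ × ℝ) => vhat z.1 z.2))
    (hvhat_bdd : ∃ M : ℝ, ∀ t x, |vhat t x| ≤ M)
    (hvhat_per : ∀ t x, vhat (t + 1) x = vhat t x ∧
      vhat t (x + (1, 0)) = vhat t x ∧ vhat t (x + (0, 1)) = vhat t x)
    (hcorr : ∀ i : ℕ,
      condExp (⨆ j ∈ Set.Iic i, MeasurableSpace.comap (X j) inferInstance) volume
          (fun ω => vhat (((i : ℝ) + 1) * Δt) (X (i + 1) ω))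
        =ᵐ[volume]
          fun ω => vhat ((i : ℝ) * Δt) (X i ω)
            - Δt * v₁ (((i : ℝ) + 1/2) * Δt) (X i ω).2) :
    ∀ n : ℕ, 1 ≤ n →
      Δt * ∑ i ∈ Finset.range n,
          ∫ ω, (X i ω).1 * v₁ (((i : ℝ) + 1/2) * Δt) (X i ω).2
      = (∑ i ∈ Finset.range n,
            ∫ ω, vhat (((i : ℝ) + 1) * Δt) (X (i + 1) ω)
              * ((X (i + 1) ω).1 - (X i ω).1))
        + vhat 0 x₀ * x₀.1
        - ∫ ω, vhat ((n : ℝ) * Δt) (X n ω) * (X n ω).1 := by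
  -- measurability of the trajectory
  have hXmeas : ∀ i, Measurable (X i) := by
    intro i
    induction i with
    | zero =>
      have : X 0 = fun _ => x₀ := funext hX₀
      rw [this]; exact measurable_const
    | succ i ih =>
      have h : X (i + 1) = fun ω =>
        ((X i ω).1 + v₁ (((i : ℝ) + 1/2) * Δt) (X i ω).2 * Δt
            + σ * Real.sqrt Δt * ξ₁ i ω,
         (X i ω).2 + v₂ (((i : ℝ) + 1/2) * Δt)
              ((X i ω).1 + v₁ (((i : ℝ) + 1/2) * Δt) (X i ω).2 * Δt) * Δt
            + σ * Real.sqrt Δt * ξ₂ i ω) := funext (hX_rec i)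
      have hv₁c : Measurable (fun ω => v₁ (((i : ℝ) + 1/2) * Δt) (X i ω).2) :=
        hv₁_meas.comp (measurable_const.prodMk ih.snd)
      have hy : Measurable (fun ω =>
          (X i ω).1 + v₁ (((i : ℝ) + 1/2) * Δt) (X i ω).2 * Δt) :=
        ih.fst.add (hv₁c.mul measurable_const)
      have hv₂c : Measurable (fun ω => v₂ (((i : ℝ) + 1/2) * Δt)
          ((X i ω).1 + v₁ (((i : ℝ) + 1/2) * Δt) (X i ω).2 * Δt)) :=
        hv₂_meas.comp (measurable_const.prodMk hy)
      rw [h]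
      exact (hy.add (measurable_const.mul (hξ₁_meas i))).prodMk
        ((ih.snd.add (hv₂c.mul measurable_const)).add
          (measurable_const.mul (hξ₂_meas i)))
  -- integrability of the noise
  have hξint : ∀ i, Integrable (ξ₁ i) volume := by
    intro i
    have h : Integrable (id : ℝ → ℝ) (Measure.map (ξ₁ i) volume) := by
      rw [hξ₁_law i]; exact gauss_integrable_id
    rwa [integrable_map_measure aestronglyMeasurable_id
      (hξ₁_meas i).aemeasurable, Function.id_comp] at h
  -- bounded compositions are integrable
  obtain ⟨M₁, hM₁⟩ := hv₁_bdd
  obtain ⟨Mv, hMv⟩ := hvhat_bdd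
  have hv₁int : ∀ (c : ℝ) (i : ℕ),
      Integrable (fun ω => v₁ c (X i ω).2) volume := fun c i =>
    ⟨(hv₁_meas.comp (measurable_const.prodMk (hXmeas i).snd)).aestronglyMeasurable,
      HasFiniteIntegral.of_bounded (C := M₁)
        (Filter.Eventually.of_forall fun ω => by
          simpa [Real.norm_eq_abs] using hM₁ c (X i ω).2)⟩
  have hvhat_comp_meas : ∀ (c : ℝ) (i : ℕ),
      Measurable (fun ω => vhat c (X i ω)) := fun c i =>
    hvhat_meas.comp (measurable_const.prodMk (hXmeas i))
  have hvhatint : ∀ (c : ℝ) (i : ℕ),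
      Integrable (fun ω => vhat c (X i ω)) volume := fun c i =>
    ⟨(hvhat_comp_meas c i).aestronglyMeasurable,
      HasFiniteIntegral.of_bounded (C := Mv)
        (Filter.Eventually.of_forall fun ω => by
          simpa [Real.norm_eq_abs] using hMv c (X i ω))⟩
  -- integrability of the first coordinate
  have hX1int : ∀ i, Integrable (fun ω => (X i ω).1) volume := by
    intro i
    induction i with
    | zero =>
      have : (fun ω => (X 0 ω).1) = fun _ => x₀.1 := funext fun ω => by rw [hX₀]
      rw [this]; exact integrable_const _
    | succ i ih =>
      have h : (fun ω => (X (i + 1) ω).1) = fun ω =>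
          (X i ω).1 + v₁ (((i : ℝ) + 1/2) * Δt) (X i ω).2 * Δt
            + σ * Real.sqrt Δt * ξ₁ i ω :=
        funext fun ω => by rw [hX_rec i ω]
      rw [h]
      exact (ih.add ((hv₁int _ i).mul_const Δt)).add ((hξint i).const_mul _)
  -- products with vhat
  have hprod : ∀ (c : ℝ) (j i : ℕ),
      Integrable (fun ω => vhat c (X j ω) * (X i ω).1) volume := fun c j i =>
    (hX1int i).bdd_mul (c := Mv) (hvhat_comp_meas c j).aestronglyMeasurable
      (Filter.Eventually.of_forall fun ω => by simpa [Real.norm_eq_abs] using hMv c (X j ω))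
  have hprodv₁ : ∀ (c : ℝ) (i : ℕ),
      Integrable (fun ω => (X i ω).1 * v₁ c (X i ω).2) volume := fun c i =>
    integrable_mul_comm' ((hX1int i).bdd_mul (c := M₁)
      (hv₁_meas.comp (measurable_const.prodMk (hXmeas i).snd)).aestronglyMeasurable
      (Filter.Eventually.of_forall fun ω => by simpa [Real.norm_eq_abs] using hM₁ c (X i ω).2))
  -- the telescoping quantity
  set G : ℕ → ℝ := fun k => ∫ ω, vhat ((k : ℝ) * Δt) (X k ω) * (X k ω).1 with hG
  -- key conditional-expectation step
  have step : ∀ i : ℕ,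
      ∫ ω, vhat (((i : ℝ) + 1) * Δt) (X (i + 1) ω) * ((X (i + 1) ω).1 - (X i ω).1)
      = G (i + 1) - G i
        + Δt * ∫ ω, (X i ω).1 * v₁ (((i : ℝ) + 1/2) * Δt) (X i ω).2 := by
    intro i
    set c : ℝ := ((i : ℝ) + 1) * Δt with hc
    set m : MeasurableSpace Ω :=
      ⨆ j ∈ Set.Iic i, MeasurableSpace.comap (X j) inferInstance with hmdef
    have hm : m ≤ (MeasureSpace.toMeasurableSpace : MeasurableSpace Ω) := by
      exact iSup₂_le fun j _ => (hXmeas j).comap_le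
    haveI : SigmaFinite ((volume : @Measure Ω MeasureSpace.toMeasurableSpace).trim hm) := by
      infer_instance
    have hfmeas : StronglyMeasurable[m] (fun ω => (X i ω).1) := by
      have hXi : Measurable[m] (X i) := by
        refine Measurable.of_comap_le ?_
        exact le_iSup₂ (f := fun j (_ : j ∈ Set.Iic i) =>
          MeasurableSpace.comap (X j) inferInstance) i (Set.self_mem_Iic)
      exact (measurable_fst.comp hXi).stronglyMeasurable
    have hg : Integrable (fun ω => vhat c (X (i + 1) ω)) volume := hvhatint c (i + 1)
    have hfg : Integrable (fun ω => (X i ω).1 * vhat c (X (i + 1) ω)) volume :=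
      integrable_mul_comm' (hprod c (i + 1) i)
    have key : ∫ ω, (X i ω).1 * vhat c (X (i + 1) ω)
        = ∫ ω, (X i ω).1 * (vhat ((i : ℝ) * Δt) (X i ω)
            - Δt * v₁ (((i : ℝ) + 1/2) * Δt) (X i ω).2) := by
      have hpull := condExp_mul_of_stronglyMeasurable_left (μ := volume) (m := m) hfmeas hfg hg
      calc ∫ ω, (X i ω).1 * vhat c (X (i + 1) ω)
          = ∫ ω, (volume[(fun ω => (X i ω).1 * vhat c (X (i + 1) ω))|m]) ω :=
            (integral_condExp hm).symm
        _ = ∫ ω, (X i ω).1 * (volume[(fun ω => vhat c (X (i + 1) ω))|m]) ω :=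
            integral_congr_ae (by filter_upwards [hpull] with ω h using h)
        _ = _ := by
            refine integral_congr_ae ?_
            filter_upwards [hcorr i] with ω h
            rw [show (volume[(fun ω => vhat c (X (i + 1) ω))|m]) ω
              = vhat ((i : ℝ) * Δt) (X i ω)
                - Δt * v₁ (((i : ℝ) + 1/2) * Δt) (X i ω).2 from h]
    have hsplit : ∫ ω, (X i ω).1 * (vhat ((i : ℝ) * Δt) (X i ω)
          - Δt * v₁ (((i : ℝ) + 1/2) * Δt) (X i ω).2)
        = (∫ ω, vhat ((i : ℝ) * Δt) (X i ω) * (X i ω).1)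
          - Δt * ∫ ω, (X i ω).1 * v₁ (((i : ℝ) + 1/2) * Δt) (X i ω).2 := by
      have h1 : Integrable (fun ω => (X i ω).1 * vhat ((i : ℝ) * Δt) (X i ω)) volume :=
        integrable_mul_comm' (hprod _ i i)
      have h2 : Integrable (fun ω =>
          (X i ω).1 * (Δt * v₁ (((i : ℝ) + 1/2) * Δt) (X i ω).2)) volume := by
        have := (hprodv₁ (((i : ℝ) + 1/2) * Δt) i).const_mul Δt
        refine this.congr (Filter.Eventually.of_forall fun ω => by ring_nf)
      rw [show (fun ω => (X i ω).1 * (vhat ((i : ℝ) * Δt) (X i ω)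
            - Δt * v₁ (((i : ℝ) + 1/2) * Δt) (X i ω).2))
          = fun ω => (X i ω).1 * vhat ((i : ℝ) * Δt) (X i ω)
            - (X i ω).1 * (Δt * v₁ (((i : ℝ) + 1/2) * Δt) (X i ω).2)
          from funext fun ω => by ring]
      rw [integral_sub h1 h2]
      congr 1
      · exact integral_congr_ae (Filter.Eventually.of_forall fun ω => mul_comm _ _)
      · rw [show (fun ω => (X i ω).1 * (Δt * v₁ (((i : ℝ) + 1/2) * Δt) (X i ω).2))
            = fun ω => Δt * ((X i ω).1 * v₁ (((i : ℝ) + 1/2) * Δt) (X i ω).2)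
            from funext fun ω => by ring]
        exact integral_const_mul Δt _
    have hsub : ∫ ω, vhat c (X (i + 1) ω) * ((X (i + 1) ω).1 - (X i ω).1)
        = (∫ ω, vhat c (X (i + 1) ω) * (X (i + 1) ω).1)
          - ∫ ω, vhat c (X (i + 1) ω) * (X i ω).1 := by
      rw [show (fun ω => vhat c (X (i + 1) ω) * ((X (i + 1) ω).1 - (X i ω).1))
          = fun ω => vhat c (X (i + 1) ω) * (X (i + 1) ω).1
            - vhat c (X (i + 1) ω) * (X i ω).1 from funext fun ω => by ring]
      exact integral_sub (hprod c (i + 1) (i + 1)) (hprod c (i + 1) i)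
    have hcomm : ∫ ω, vhat c (X (i + 1) ω) * (X i ω).1
        = ∫ ω, (X i ω).1 * vhat c (X (i + 1) ω) :=
      integral_congr_ae (Filter.Eventually.of_forall fun ω => mul_comm _ _)
    have hGsucc : G (i + 1) = ∫ ω, vhat c (X (i + 1) ω) * (X (i + 1) ω).1 := by
      simp only [hG, hc]
      norm_num
    rw [hsub, hcomm, key, hsplit, hGsucc]
    simp only [hG]
    ring
  intro n _
  have hsum : ∑ i ∈ Finset.range n,
      ∫ ω, vhat (((i : ℝ) + 1) * Δt) (X (i + 1) ω) * ((X (i + 1) ω).1 - (X i ω).1)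
      = (G n - G 0)
        + Δt * ∑ i ∈ Finset.range n,
            ∫ ω, (X i ω).1 * v₁ (((i : ℝ) + 1/2) * Δt) (X i ω).2 := by
    rw [Finset.mul_sum, ← Finset.sum_range_sub (f := G), ← Finset.sum_add_distrib]
    exact Finset.sum_congr rfl fun i _ => step i
  have hG0 : G 0 = vhat 0 x₀ * x₀.1 := by
    simp only [hG, Nat.cast_zero, zero_mul]
    have : (fun ω => vhat 0 (X 0 ω) * (X 0 ω).1) = fun _ => vhat 0 x₀ * x₀.1 :=
      funext fun ω => by rw [hX₀]
    rw [this, integral_const, probReal_univ, one_smul]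
  have hGn : G n = ∫ ω, vhat ((n : ℝ) * Δt) (X n ω) * (X n ω).1 := rfl
  rw [hsum, hG0, hGn]
  ring
end
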